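/- arXiv:1406.1538 — 5 statements merged into one kernel-verified Lean document; each statement's English description precedes it below -/
import Mathlib

section
/- For every real numbers t and x, the series ∑_{n=0}^{∞} (t^n / n!) h_n(x) converges and its sum equals exp(t x − t²/2). -/
open Polynomial Finset
open scoped Nat

private lemma two_mul_factorial_eq (m : ℕ) :
    (2 * m).factorial = 2 ^ m * m.factorial * (2 * m - 1)‼ := by
  cases m with
  | zero => rfl
  | succ m =>
    have h1 : 2 * (m + 1) = (2 * m + 1) + 1 := by ring
    rw [h1, Nat.factorial_eq_mul_doubleFactorial, ← h1, Nat.doubleFactorial_two_mul]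
    have h2 : 2 * (m + 1) - 1 = 2 * m + 1 := by omega
    rw [h2]

private lemma real_exp_hasSum (y : ℝ) :
    HasSum (fun n : ℕ => y ^ n / n.factorial) (Real.exp y) := by
  rw [Real.exp_eq_exp_ℝ]
  exact NormedSpace.expSeries_div_hasSum_exp y

private lemma aeval_hermite_eq_sum (x : ℝ) (n : ℕ) :
    Polynomial.aeval x (Polynomial.hermite n) =
      ∑ k ∈ range (n + 1), (((Polynomial.hermite n).coeff k : ℝ) * x ^ k) := by
  have hd : (((Polynomial.hermite n).map (algebraMap ℤ ℝ)).natDegree) < n + 1 :=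
    lt_of_le_of_lt (le_trans natDegree_map_le (le_of_eq natDegree_hermite))
      (Nat.lt_succ_self n)
  rw [aeval_def, eval₂_eq_eval_map, eval_eq_sum_range' hd]
  simp [coeff_map]

private lemma hermite_term_eq (t x : ℝ) (n k : ℕ) (hk : k ≤ n) :
    t ^ n / n.factorial * (((Polynomial.hermite n).coeff k : ℝ) * x ^ k) =
      ((t * x) ^ k / k.factorial) *
        (if Even (n - k) then (-(t ^ 2) / 2) ^ ((n - k) / 2) / ((n - k) / 2).factorial else 0) := by
  by_cases hpar : Even (n - k)
  · obtain ⟨m, hm⟩ := hpar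
    have hn : n = 2 * m + k := by omega
    subst hn
    rw [if_pos ⟨m, hm⟩]
    have hdk : 2 * m + k - k = 2 * m := by omega
    rw [hdk, Nat.mul_div_cancel_left _ two_pos, coeff_hermite_explicit]
    have h1 : (2 * m + k).choose k * k.factorial * (2 ^ m * m.factorial * (2 * m - 1)‼)
        = (2 * m + k).factorial := by
      rw [← two_mul_factorial_eq]
      have := Nat.choose_mul_factorial_mul_factorial (Nat.le_add_left k (2 * m))
      rwa [Nat.add_sub_cancel] at this
    have hfac : ((2 * m + k).factorial : ℝ) =
        ((2 * m + k).choose k : ℝ) * k.factorial *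
          (2 ^ m * m.factorial * (((2 * m - 1)‼ : ℕ) : ℝ)) := by
      exact_mod_cast h1.symm
    have hneg : (-(t ^ 2) / 2 : ℝ) ^ m = (-1) ^ m * (t ^ 2) ^ m / 2 ^ m := by
      rw [div_pow, neg_eq_neg_one_mul, mul_pow]
    have hc : (0 : ℝ) < ((2 * m + k).choose k : ℝ) := by
      exact_mod_cast Nat.choose_pos (Nat.le_add_left k (2 * m))
    have hd : (0 : ℝ) < (((2 * m - 1)‼ : ℕ) : ℝ) := by
      exact_mod_cast Nat.doubleFactorial_pos _
    have hkf : ((k.factorial : ℝ)) ≠ 0 := by exact_mod_cast k.factorial_ne_zero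
    have hmf : ((m.factorial : ℝ)) ≠ 0 := by exact_mod_cast m.factorial_ne_zero
    rw [hfac, hneg]
    push_cast
    field_simp
    ring
  · rw [if_neg hpar, mul_zero]
    have hodd : Odd (n + k) := by
      rw [Nat.odd_add, Nat.odd_iff, Nat.even_iff]
      rw [Nat.even_sub hk, Nat.even_iff, Nat.even_iff] at hpar
      omega
    rw [coeff_hermite_of_odd_add hodd]
    simp

/-- For every real `t` and `x`, the series
`∑ n, (t^n / n!) * hₙ(x)` (where `hₙ` is the probabilists' Hermite polynomial)
converges with sum `exp (t*x - t^2/2)`. -/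
theorem hermite_generating_function (t x : ℝ) :
    HasSum (fun n : ℕ => t ^ n / n.factorial * Polynomial.aeval x (Polynomial.hermite n))
      (Real.exp (t * x - t ^ 2 / 2)) := by
  set f : ℕ → ℝ := fun k => (t * x) ^ k / k.factorial with hf
  set g : ℕ → ℝ := fun j =>
    if Even j then (-(t ^ 2) / 2) ^ (j / 2) / (j / 2).factorial else 0 with hg
  have hfs : HasSum f (Real.exp (t * x)) := real_exp_hasSum (t * x)
  have hinj : Function.Injective (fun m : ℕ => 2 * m) := by
    intro a b h
    have h' : 2 * a = 2 * b := h
    omega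
  have hcomp : ∀ m : ℕ, g (2 * m) = (-(t ^ 2) / 2) ^ m / m.factorial := by
    intro m
    have h2 : 2 * m / 2 = m := Nat.mul_div_cancel_left m two_pos
    simp only [hg, if_pos (even_two_mul m), h2]
  have hzero : ∀ j ∉ Set.range (fun m : ℕ => 2 * m), g j = 0 := by
    intro j hj
    have hje : ¬ Even j := by
      rintro ⟨r, hr⟩
      exact hj ⟨r, by show 2 * r = j; omega⟩
    simp [hg, hje]
  have hgs : HasSum g (Real.exp (-(t ^ 2) / 2)) := by
    rw [← hinj.hasSum_iff hzero]
    rw [show ((g ∘ fun m : ℕ => 2 * m)) = fun m : ℕ => (-(t ^ 2) / 2) ^ m / m.factorial from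
      funext hcomp]
    exact real_exp_hasSum (-(t ^ 2) / 2)
  have hfn : Summable fun n => ‖f n‖ := by
    refine (real_exp_hasSum |t * x|).summable.congr fun n => ?_
    simp [hf, Real.norm_eq_abs, abs_div, abs_pow, abs_mul, Nat.abs_cast]
  have hgn : Summable fun n => ‖g n‖ := by
    rw [← hinj.summable_iff (fun j hj => by simp [hzero j hj])]
    refine (real_exp_hasSum |(-(t ^ 2) / 2)|).summable.congr fun m => ?_
    show _ = ‖g (2 * m)‖
    rw [hcomp m]
    simp [Real.norm_eq_abs, abs_div, abs_pow, abs_mul, Nat.abs_cast]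
  have key := hasSum_sum_range_mul_of_summable_norm hfn hgn
  rw [hfs.tsum_eq, hgs.tsum_eq, ← Real.exp_add] at key
  have hexp : t * x + -(t ^ 2) / 2 = t * x - t ^ 2 / 2 := by ring
  rw [hexp] at key
  have hterm : ∀ n : ℕ, t ^ n / n.factorial * Polynomial.aeval x (Polynomial.hermite n)
      = ∑ k ∈ range (n + 1), f k * g (n - k) := by
    intro n
    rw [aeval_hermite_eq_sum, Finset.mul_sum]
    refine Finset.sum_congr rfl fun k hk => ?_
    rw [Finset.mem_range, Nat.lt_succ_iff] at hk
    rw [hermite_term_eq t x n k hk]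
  rw [show (fun n : ℕ => t ^ n / n.factorial * Polynomial.aeval x (Polynomial.hermite n))
    = fun n : ℕ => ∑ k ∈ range (n + 1), f k * g (n - k) from funext hterm]
  exact key
end

section
/- For every real number s ≥ 0 and every natural number p, the series (−i)^p ∑_{n=0}^{∞} (s^n/n!) ∑_{k=0}^{2n} i^k · b_{2n,k} · (d^p/dz^p)(e^{iz} z^k)│_{z=0} converges and its sum equals exp(p² s). (With s = T^{2H}σ²/2 this identity recovers the p-th moment exp(p² T^{2H}σ²/2) of a lognormal(0, T^{2H}σ²) random variable from the divergent power-series representation of its characteristic function.) -/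
/-- The Stirling numbers of the second kind `b j k`, defined by
`b 0 0 = 1`, `b j 0 = 0` for `j ≥ 1`, `b 0 k = 0` for `k ≥ 1`, and
`b (j+1) (k+1) = (k+1) * b j (k+1) + b j k`. -/
def stirling2 : ℕ → ℕ → ℕ
  | 0, 0 => 1
  | 0, _ + 1 => 0
  | _ + 1, 0 => 0
  | j + 1, k + 1 => (k + 1) * stirling2 j (k + 1) + stirling2 j k

lemma stirling2_eq_zero : ∀ {m k : ℕ}, m < k → stirling2 m k = 0
  | 0, _ + 1, _ => rfl
  | m + 1, k + 1, h => by
    have h1 : m < k + 1 := by omega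
    have h2 : m < k := by omega
    simp [stirling2, stirling2_eq_zero h1, stirling2_eq_zero h2]

lemma stirling2_sum (m x : ℕ) :
    ∑ k ∈ Finset.range (m + 1), stirling2 m k * x.descFactorial k = x ^ m := by
  induction m with
  | zero => simp [stirling2]
  | succ m ih =>
    have key : ∀ k, x * x.descFactorial k
        = x.descFactorial (k + 1) + k * x.descFactorial k := by
      intro k
      rcases le_or_gt k x with h | h
      · rw [Nat.descFactorial_succ, ← add_mul, Nat.sub_add_cancel h]
      · rw [Nat.descFactorial_succ,
          Nat.descFactorial_eq_zero_iff_lt.mpr h]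
        simp
    have step : ∑ k ∈ Finset.range (m + 1), (k + 1) * stirling2 m (k + 1)
          * x.descFactorial (k + 1)
        = ∑ k ∈ Finset.range (m + 1), k * stirling2 m k * x.descFactorial k := by
      rw [Finset.sum_range_succ, stirling2_eq_zero (Nat.lt_succ_self m)]
      rw [Finset.sum_range_succ' (fun k => k * stirling2 m k * x.descFactorial k)]
      simp
    calc ∑ k ∈ Finset.range (m + 2), stirling2 (m + 1) k * x.descFactorial k
        = ∑ k ∈ Finset.range (m + 1), stirling2 (m + 1) (k + 1) * x.descFactorial (k + 1) := by
          rw [Finset.sum_range_succ' (fun k => stirling2 (m + 1) k * x.descFactorial k)]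
          simp [stirling2]
      _ = ∑ k ∈ Finset.range (m + 1),
            ((k + 1) * stirling2 m (k + 1) * x.descFactorial (k + 1)
              + stirling2 m k * x.descFactorial (k + 1)) := by
          refine Finset.sum_congr rfl fun k _ => ?_
          show stirling2 (m+1) (k+1) * _ = _
          simp [stirling2]; ring
      _ = ∑ k ∈ Finset.range (m + 1), k * stirling2 m k * x.descFactorial k
            + ∑ k ∈ Finset.range (m + 1), stirling2 m k * x.descFactorial (k + 1) := by
          rw [Finset.sum_add_distrib, step]
      _ = ∑ k ∈ Finset.range (m + 1), stirling2 m k * (x * x.descFactorial k) := by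
          rw [← Finset.sum_add_distrib]
          refine Finset.sum_congr rfl fun k _ => ?_
          rw [key]; ring
      _ = x ^ (m + 1) := by
          rw [pow_succ, ← ih, Finset.sum_mul]
          exact Finset.sum_congr rfl fun k _ => by ring


lemma hasDerivAt_exp_mul_pow (m : ℕ) (z : ℂ) :
    HasDerivAt (fun z : ℂ => Complex.exp (Complex.I * z) * z ^ m)
      (Complex.exp (Complex.I * z) * Complex.I * z ^ m
        + Complex.exp (Complex.I * z) * (m * z ^ (m - 1))) z := by
  have h1 : HasDerivAt (fun z : ℂ => Complex.exp (Complex.I * z))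
      (Complex.exp (Complex.I * z) * Complex.I) z := by
    simpa using (((hasDerivAt_id z).const_mul Complex.I).cexp)
  simpa [mul_comm, mul_assoc, mul_left_comm] using h1.fun_mul (hasDerivAt_pow m z)

lemma iteratedDeriv_exp_mul_pow (p k : ℕ) :
    iteratedDeriv p (fun z : ℂ => Complex.exp (Complex.I * z) * z ^ k)
      = fun z : ℂ => ∑ j ∈ Finset.range (p + 1),
          (p.choose j : ℂ) * Complex.I ^ (p - j) * (k.descFactorial j : ℂ)
            * Complex.exp (Complex.I * z) * z ^ (k - j) := by
  induction p with
  | zero => funext z; simp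
  | succ p ih =>
    funext z
    rw [iteratedDeriv_succ, ih]
    have hd : HasDerivAt
        (fun z : ℂ => ∑ j ∈ Finset.range (p + 1),
          (p.choose j : ℂ) * Complex.I ^ (p - j) * (k.descFactorial j : ℂ)
            * Complex.exp (Complex.I * z) * z ^ (k - j))
        (∑ j ∈ Finset.range (p + 1),
          (p.choose j : ℂ) * Complex.I ^ (p - j) * (k.descFactorial j : ℂ)
            * (Complex.exp (Complex.I * z) * Complex.I * z ^ (k - j)
              + Complex.exp (Complex.I * z) * ((k - j : ℕ) * z ^ (k - j - 1)))) z := by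
      refine HasDerivAt.fun_sum fun j _ => ?_
      have := (hasDerivAt_exp_mul_pow (k - j) z).const_mul
        ((p.choose j : ℂ) * Complex.I ^ (p - j) * (k.descFactorial j : ℂ))
      simpa [mul_assoc] using this
    rw [hd.deriv]
    have expand : ∀ j, (p.choose j : ℂ) * Complex.I ^ (p - j) * (k.descFactorial j : ℂ)
            * (Complex.exp (Complex.I * z) * Complex.I * z ^ (k - j)
              + Complex.exp (Complex.I * z) * ((k - j : ℕ) * z ^ (k - j - 1)))
        = (p.choose j : ℂ) * (Complex.I ^ (p - j) * Complex.I) * (k.descFactorial j : ℂ)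
            * Complex.exp (Complex.I * z) * z ^ (k - j)
          + (p.choose j : ℂ) * Complex.I ^ (p - j) * (k.descFactorial (j + 1) : ℂ)
            * Complex.exp (Complex.I * z) * z ^ (k - (j + 1)) := by
      intro j
      have hdf : (k.descFactorial (j + 1) : ℂ) = ((k - j : ℕ) : ℂ) * (k.descFactorial j : ℂ) := by
        rw [Nat.descFactorial_succ]; push_cast; ring
      have hexp : k - (j + 1) = k - j - 1 := by omega
      rw [hdf, hexp]; ring
    rw [Finset.sum_congr rfl fun j _ => expand j, Finset.sum_add_distrib]
    -- RHS manipulation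
    rw [Finset.sum_range_succ'
      (fun j => ((p+1).choose j : ℂ) * Complex.I ^ (p + 1 - j) * (k.descFactorial j : ℂ)
          * Complex.exp (Complex.I * z) * z ^ (k - j))]
    have pascal : ∀ j, (((p+1).choose (j+1) : ℕ) : ℂ) = (p.choose j : ℂ) + (p.choose (j+1) : ℂ) := by
      intro j; rw [Nat.choose_succ_succ]; push_cast; ring
    have splitRHS : ∑ j ∈ Finset.range (p + 1),
          ((p+1).choose (j+1) : ℂ) * Complex.I ^ (p + 1 - (j+1)) * (k.descFactorial (j+1) : ℂ)
            * Complex.exp (Complex.I * z) * z ^ (k - (j+1))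
        = (∑ j ∈ Finset.range (p + 1),
            (p.choose j : ℂ) * Complex.I ^ (p - j) * (k.descFactorial (j+1) : ℂ)
              * Complex.exp (Complex.I * z) * z ^ (k - (j+1)))
          + ∑ j ∈ Finset.range (p + 1),
            (p.choose (j+1) : ℂ) * Complex.I ^ (p - j) * (k.descFactorial (j+1) : ℂ)
              * Complex.exp (Complex.I * z) * z ^ (k - (j+1)) := by
      rw [← Finset.sum_add_distrib]
      refine Finset.sum_congr rfl fun j hj => ?_
      have : p + 1 - (j + 1) = p - j := by omega
      rw [this, pascal]; ring
    rw [splitRHS]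
    have firstPart : ∑ j ∈ Finset.range (p + 1),
          (p.choose j : ℂ) * (Complex.I ^ (p - j) * Complex.I) * (k.descFactorial j : ℂ)
            * Complex.exp (Complex.I * z) * z ^ (k - j)
        = ((p+1).choose 0 : ℂ) * Complex.I ^ (p + 1 - 0) * (k.descFactorial 0 : ℂ)
            * Complex.exp (Complex.I * z) * z ^ (k - 0)
          + ∑ j ∈ Finset.range (p + 1),
            (p.choose (j+1) : ℂ) * Complex.I ^ (p - j) * (k.descFactorial (j+1) : ℂ)
              * Complex.exp (Complex.I * z) * z ^ (k - (j+1)) := by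
      rw [Finset.sum_range_succ
        (fun j => (p.choose (j+1) : ℂ) * Complex.I ^ (p - j) * (k.descFactorial (j+1) : ℂ)
            * Complex.exp (Complex.I * z) * z ^ (k - (j+1))) p]
      rw [Finset.sum_range_succ'
        (fun j => (p.choose j : ℂ) * (Complex.I ^ (p - j) * Complex.I) * (k.descFactorial j : ℂ)
            * Complex.exp (Complex.I * z) * z ^ (k - j)) p]
      have hfp : (p.choose (p+1) : ℂ) * Complex.I ^ (p - p) * (k.descFactorial (p+1) : ℂ)
            * Complex.exp (Complex.I * z) * z ^ (k - (p+1)) = 0 := by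
        simp [Nat.choose_succ_self]
      have hsum : ∑ j ∈ Finset.range p,
            (p.choose (j+1) : ℂ) * (Complex.I ^ (p - (j+1)) * Complex.I) * (k.descFactorial (j+1) : ℂ)
              * Complex.exp (Complex.I * z) * z ^ (k - (j+1))
          = ∑ j ∈ Finset.range p,
            (p.choose (j+1) : ℂ) * Complex.I ^ (p - j) * (k.descFactorial (j+1) : ℂ)
              * Complex.exp (Complex.I * z) * z ^ (k - (j+1)) := by
        refine Finset.sum_congr rfl fun j hj => ?_
        have hj' : j < p := Finset.mem_range.mp hj
        have he : p - (j+1) + 1 = p - j := by omega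
        rw [← pow_succ, he]
      have h0 : (p.choose 0 : ℂ) * (Complex.I ^ (p - 0) * Complex.I) * (k.descFactorial 0 : ℂ)
            * Complex.exp (Complex.I * z) * z ^ (k - 0)
          = ((p+1).choose 0 : ℂ) * Complex.I ^ (p + 1 - 0) * (k.descFactorial 0 : ℂ)
            * Complex.exp (Complex.I * z) * z ^ (k - 0) := by
        rw [← pow_succ]
        norm_num
      rw [hfp, hsum, h0]
      ring
    rw [firstPart]
    ring

lemma iteratedDeriv_exp_mul_pow_zero (p k : ℕ) :
    iteratedDeriv p (fun z : ℂ => Complex.exp (Complex.I * z) * z ^ k) 0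
      = if k ≤ p then (p.choose k : ℂ) * (k.factorial : ℂ) * Complex.I ^ (p - k) else 0 := by
  rw [iteratedDeriv_exp_mul_pow]
  beta_reduce
  by_cases h : k ≤ p
  · rw [if_pos h]
    rw [Finset.sum_eq_single_of_mem k (Finset.mem_range.mpr (by omega))]
    · simp [Nat.descFactorial_self]; ring
    · intro j hj hne
      rcases lt_or_gt_of_ne hne with hlt | hgt
      · have : k - j ≠ 0 := by omega
        simp [zero_pow this]
      · simp [Nat.descFactorial_eq_zero_iff_lt.mpr hgt]
  · rw [if_neg h]
    refine Finset.sum_eq_zero fun j hj => ?_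
    have hj' : j < p + 1 := Finset.mem_range.mp hj
    have : k - j ≠ 0 := by omega
    simp [zero_pow this]

lemma key_term (p m : ℕ) :
    ∑ k ∈ Finset.range (m + 1),
        Complex.I ^ k * (stirling2 m k : ℂ) *
          iteratedDeriv p (fun z : ℂ => Complex.exp (Complex.I * z) * z ^ k) 0
      = Complex.I ^ p * ((p : ℂ) ^ m) := by
  have step : ∀ k, Complex.I ^ k * (stirling2 m k : ℂ) *
        iteratedDeriv p (fun z : ℂ => Complex.exp (Complex.I * z) * z ^ k) 0
      = Complex.I ^ p * ((stirling2 m k : ℂ) * (p.descFactorial k : ℂ)) := by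
    intro k
    rw [iteratedDeriv_exp_mul_pow_zero]
    by_cases h : k ≤ p
    · rw [if_pos h, Nat.descFactorial_eq_factorial_mul_choose]
      have : Complex.I ^ k * Complex.I ^ (p - k) = Complex.I ^ p := by
        rw [← pow_add]
        congr 1
        omega
      push_cast
      calc Complex.I ^ k * (stirling2 m k : ℂ) *
            ((p.choose k : ℂ) * (k.factorial : ℂ) * Complex.I ^ (p - k))
          = (Complex.I ^ k * Complex.I ^ (p - k)) * ((stirling2 m k : ℂ) *
              ((k.factorial : ℂ) * (p.choose k : ℂ))) := by ring
        _ = _ := by rw [this]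
    · rw [if_neg h, Nat.descFactorial_eq_zero_iff_lt.mpr (by omega)]
      simp
  rw [Finset.sum_congr rfl fun k _ => step k, ← Finset.mul_sum]
  congr 1
  have := stirling2_sum m p
  calc ∑ k ∈ Finset.range (m + 1), (stirling2 m k : ℂ) * (p.descFactorial k : ℂ)
      = ((∑ k ∈ Finset.range (m + 1), stirling2 m k * p.descFactorial k : ℕ) : ℂ) := by
        push_cast; ring_nf
    _ = ((p ^ m : ℕ) : ℂ) := by rw [this]
    _ = (p : ℂ) ^ m := by push_cast; ring

/-- For every real `s ≥ 0` and natural `p`, the series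
`(-i)^p ∑_{n} (s^n/n!) ∑_{k=0}^{2n} i^k b_{2n,k} (d^p/dz^p)(e^{iz} z^k)|_{z=0}`
converges with sum `exp (p² s)`. -/
theorem hasSum_lognormal_moment (s : ℝ) (hs : 0 ≤ s) (p : ℕ) :
    HasSum
      (fun n : ℕ => (-Complex.I) ^ p * ((s : ℂ) ^ n / n.factorial) *
        ∑ k ∈ Finset.range (2 * n + 1),
          Complex.I ^ k * (stirling2 (2 * n) k : ℂ) *
            iteratedDeriv p (fun z : ℂ => Complex.exp (Complex.I * z) * z ^ k) 0)
      ((Real.exp ((p : ℝ) ^ 2 * s) : ℝ) : ℂ) := by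
  have key : (fun n : ℕ => (-Complex.I) ^ p * ((s : ℂ) ^ n / n.factorial) *
        ∑ k ∈ Finset.range (2 * n + 1),
          Complex.I ^ k * (stirling2 (2 * n) k : ℂ) *
            iteratedDeriv p (fun z : ℂ => Complex.exp (Complex.I * z) * z ^ k) 0)
      = fun n : ℕ => ((p : ℂ) ^ 2 * (s : ℂ)) ^ n / n.factorial := by
    funext n
    rw [key_term p (2 * n)]
    have h1 : (-Complex.I) ^ p * Complex.I ^ p = 1 := by
      rw [← mul_pow]
      simp [Complex.I_mul_I]
    have h2 : ((p : ℂ) ^ 2 * (s : ℂ)) ^ n = (p : ℂ) ^ (2 * n) * (s : ℂ) ^ n := by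
      rw [mul_pow, ← pow_mul]
    calc (-Complex.I) ^ p * ((s : ℂ) ^ n / n.factorial) *
          (Complex.I ^ p * ((p : ℂ) ^ (2 * n)))
        = ((-Complex.I) ^ p * Complex.I ^ p) *
            ((p : ℂ) ^ (2 * n) * (s : ℂ) ^ n / n.factorial) := by ring
      _ = ((p : ℂ) ^ 2 * (s : ℂ)) ^ n / n.factorial := by rw [h1, h2]; ring
  rw [key]
  have h := NormedSpace.expSeries_div_hasSum_exp ((p : ℂ) ^ 2 * (s : ℂ))
  rw [← Complex.exp_eq_exp_ℂ] at h
  have hval : ((Real.exp ((p : ℝ) ^ 2 * s) : ℝ) : ℂ)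
      = Complex.exp ((p : ℂ) ^ 2 * (s : ℂ)) := by
    rw [Complex.ofReal_exp]
    push_cast
    ring_nf
  rw [hval]
  exact h
end

section
/- Let 1/2 < H < 1 and T > 0. Then the iterated integral over the simplex {0 ≤ u₁ ≤ u₂ ≤ v₁ ≤ v₂ ≤ T} of 4(H(2H−1))² (v₁−u₁)^{2H−2}(v₂−u₂)^{2H−2} [ (T−u₂)(T−v₂) + 2(T−v₁)(T−v₂) ] dv₂ du₂ dv₁ du₁ equals ( (8H²+14H−1) / (4(4H+1)(2H+1)(4H−1)) − ((6H+5)/(2H+1)) · ℬ(2H+1, 2H+2) ) · T^{4H+2}. -/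
open MeasureTheory intervalIntegral Set

/-- The Beta function `ℬ(x,y) = ∫₀¹ t^(x-1) (1-t)^(y-1) dt`. -/
noncomputable def betaFn (x y : ℝ) : ℝ :=
  ∫ t in (0 : ℝ)..1, t ^ (x - 1) * (1 - t) ^ (y - 1)

lemma betaFn_eq_Gamma {x y : ℝ} (hx : 0 < x) (hy : 0 < y) :
    betaFn x y = Real.Gamma x * Real.Gamma y / Real.Gamma (x + y) := by
  have h1 : Complex.betaIntegral x y = (betaFn x y : ℂ) := by
    rw [Complex.betaIntegral, betaFn, ← intervalIntegral.integral_ofReal]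
    apply intervalIntegral.integral_congr
    intro t ht
    rw [uIcc_of_le (zero_le_one)] at ht
    push_cast
    rw [Complex.ofReal_cpow ht.1 (x - 1), Complex.ofReal_cpow (by linarith [ht.2]) (y - 1)]
    push_cast
    ring
  have h2 := Complex.Gamma_mul_Gamma_eq_betaIntegral (s := (x : ℂ)) (t := (y : ℂ))
    (by simpa using hx) (by simpa using hy)
  rw [h1, Complex.Gamma_ofReal, Complex.Gamma_ofReal, ← Complex.ofReal_add,
    Complex.Gamma_ofReal] at h2
  have h3 : Real.Gamma x * Real.Gamma y = Real.Gamma (x + y) * betaFn x y := by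
    exact_mod_cast h2
  have h4 : Real.Gamma (x + y) ≠ 0 := (Real.Gamma_pos_of_pos (by linarith)).ne'
  field_simp
  linarith [h3]

lemma betaFn_two {x : ℝ} (hx : 0 < x) : betaFn x 2 = 1 / (x * (x + 1)) := by
  rw [betaFn_eq_Gamma hx two_pos, show x + 2 = (x + 1) + 1 by ring,
    Real.Gamma_add_one (by positivity), Real.Gamma_add_one hx.ne', Real.Gamma_two]
  have h := (Real.Gamma_pos_of_pos hx).ne'
  field_simp

lemma betaFn_three {x : ℝ} (hx : 0 < x) : betaFn x 3 = 2 / (x * (x + 1) * (x + 2)) := by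
  have hg3 : Real.Gamma 3 = 2 := by
    rw [show (3 : ℝ) = 2 + 1 by norm_num, Real.Gamma_add_one two_ne_zero, Real.Gamma_two]
    norm_num
  rw [betaFn_eq_Gamma hx three_pos, hg3, show x + 3 = (x + 2) + 1 by ring,
    Real.Gamma_add_one (by positivity), show x + 2 = (x + 1) + 1 by ring,
    Real.Gamma_add_one (by positivity), Real.Gamma_add_one hx.ne']
  have h := (Real.Gamma_pos_of_pos hx).ne'
  field_simp

lemma betaFn_ratio {a : ℝ} (ha : 0 < a) :
    betaFn a (a + 4) = ((a + 3) * (2 * a + 4) / (a * (a + 1))) * betaFn (a + 2) (a + 3) := by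
  rw [betaFn_eq_Gamma ha (by linarith), betaFn_eq_Gamma (by linarith) (by linarith)]
  have e1 : Real.Gamma (a + 4) = (a + 3) * Real.Gamma (a + 3) := by
    rw [show a + 4 = (a + 3) + 1 by ring, Real.Gamma_add_one (by positivity)]
  have e2 : Real.Gamma (a + 2) = (a + 1) * (a * Real.Gamma a) := by
    rw [show a + 2 = (a + 1) + 1 by ring, Real.Gamma_add_one (by positivity),
      Real.Gamma_add_one ha.ne']
  have e3 : Real.Gamma (a + 3) = (a + 2) * Real.Gamma (a + 2) := by
    rw [show a + 3 = (a + 2) + 1 by ring, Real.Gamma_add_one (by positivity)]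
  have e4 : Real.Gamma ((a + 2) + (a + 3)) = (2 * a + 4) * Real.Gamma (2 * a + 4) := by
    rw [show (a + 2) + (a + 3) = (2 * a + 4) + 1 by ring,
      Real.Gamma_add_one (by positivity)]
  have e5 : a + (a + 4) = 2 * a + 4 := by ring
  rw [e5, e1, e3, e2, e4]
  have h1 := (Real.Gamma_pos_of_pos ha).ne'
  have h2 := (Real.Gamma_pos_of_pos (show (0:ℝ) < 2 * a + 4 by linarith)).ne'
  field_simp




lemma integral_pow_shift {r u c : ℝ} (hr : (-1 : ℝ) < r) (h : u ≤ c) :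
    ∫ v in u..c, (v - u) ^ r = (c - u) ^ (r + 1) / (r + 1) := by
  have h1 := intervalIntegral.integral_comp_sub_right (a := u) (b := c) (fun x => x ^ r) u
  rw [h1, sub_self, integral_rpow (Or.inl hr), Real.zero_rpow (by linarith), sub_zero]

lemma integral_pow_Tsub {r c : ℝ} (hr : (0 : ℝ) ≤ r) :
    ∫ x in (0 : ℝ)..c, (c - x) ^ r = c ^ (r + 1) / (r + 1) := by
  have h1 := intervalIntegral.integral_comp_sub_left (a := (0:ℝ)) (b := c) (fun x => x ^ r) c
  rw [h1, sub_self, sub_zero, integral_rpow (Or.inl (by linarith)),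
    Real.zero_rpow (by linarith), sub_zero]

lemma beta_integrable {p q : ℝ} (u c : ℝ) (hp : 0 < p) (hq : 1 ≤ q) :
    IntervalIntegrable (fun v => (v - u) ^ (p - 1) * (c - v) ^ (q - 1)) volume u c := by
  have h1 : IntervalIntegrable (fun v : ℝ => (v - u) ^ (p - 1)) volume u c := by
    simpa using (intervalIntegrable_rpow' (a := 0) (b := c - u)
      (show (-1:ℝ) < p - 1 by linarith)).comp_sub_right u
  exact h1.mul_continuousOn ((continuousOn_const.sub continuousOn_id).rpow_const
    (fun x _ => Or.inr (by linarith)))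

lemma integral_beta_kernel {p q u c : ℝ} (hp : 0 < p) (hq : 0 < q) (h : u < c) :
    ∫ v in u..c, (v - u) ^ (p - 1) * (c - v) ^ (q - 1)
      = betaFn p q * (c - u) ^ (p + q - 1) := by
  have hL : 0 < c - u := by linarith
  have step1 : (∫ v in u..c, (v - u) ^ (p - 1) * (c - v) ^ (q - 1))
      = ∫ v in u..c, (fun t : ℝ => t ^ (p - 1) * ((c - u) - t) ^ (q - 1)) (v - u) := by
    apply intervalIntegral.integral_congr
    intro v _
    simp only
    rw [show (c - u) - (v - u) = c - v by ring]
  rw [step1, intervalIntegral.integral_comp_sub_right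
    (fun t : ℝ => t ^ (p - 1) * ((c - u) - t) ^ (q - 1)) u, sub_self]
  have step2 := intervalIntegral.integral_comp_mul_right (a := (0:ℝ)) (b := 1)
    (fun t : ℝ => t ^ (p - 1) * ((c - u) - t) ^ (q - 1)) hL.ne'
  rw [zero_mul, one_mul] at step2
  have key : (∫ x in (0:ℝ)..(c - u), x ^ (p - 1) * ((c - u) - x) ^ (q - 1))
      = (c - u) • ∫ s in (0:ℝ)..1, (s * (c - u)) ^ (p - 1) * ((c - u) - s * (c - u)) ^ (q - 1) := by
    rw [step2, smul_smul, mul_inv_cancel₀ hL.ne', one_smul]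
  rw [key]
  have step4 : (∫ s in (0:ℝ)..1, (s * (c - u)) ^ (p - 1) * ((c - u) - s * (c - u)) ^ (q - 1))
      = ∫ s in (0:ℝ)..1, ((c - u) ^ (p - 1) * (c - u) ^ (q - 1)) * (s ^ (p - 1) * (1 - s) ^ (q - 1)) := by
    apply intervalIntegral.integral_congr
    intro s hs
    rw [uIcc_of_le zero_le_one] at hs
    simp only
    rw [Real.mul_rpow hs.1 hL.le, show (c - u) - s * (c - u) = (1 - s) * (c - u) by ring,
      Real.mul_rpow (by linarith [hs.2]) hL.le]
    ring
  rw [step4, intervalIntegral.integral_const_mul]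
  have step5 : (∫ s in (0:ℝ)..1, s ^ (p - 1) * (1 - s) ^ (q - 1)) = betaFn p q := rfl
  rw [step5, smul_eq_mul, show p + q - 1 = 1 + ((p - 1) + (q - 1)) by ring,
    Real.rpow_add hL, Real.rpow_add hL, Real.rpow_one]
  ring



lemma inner_int {a u₂ v₁ T : ℝ} (ha : 0 < a) (h1 : u₂ < v₁) (h2 : v₁ ≤ T) :
    ∫ v₂ in v₁..T, (v₂ - u₂) ^ (a - 1) * (T - v₂)
      = (T - u₂) * ((T - u₂) ^ a - (v₁ - u₂) ^ a) / a
        - ((T - u₂) ^ (a + 1) - (v₁ - u₂) ^ (a + 1)) / (a + 1) := by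
  have key : ∀ v ∈ uIcc v₁ T,
      HasDerivAt (fun x => (T - u₂) * (x - u₂) ^ a / a - (x - u₂) ^ (a + 1) / (a + 1))
        ((v - u₂) ^ (a - 1) * (T - v)) v := by
    intro v hv
    rw [uIcc_of_le h2] at hv
    have hvpos : 0 < v - u₂ := by
      have := hv.1; linarith
    have hid : HasDerivAt (fun x : ℝ => x - u₂) 1 v := (hasDerivAt_id v).sub_const u₂
    have d1 : HasDerivAt (fun x : ℝ => (x - u₂) ^ a) (a * (v - u₂) ^ (a - 1)) v := by
      simpa using hid.rpow_const (p := a) (Or.inl hvpos.ne')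
    have d2 : HasDerivAt (fun x : ℝ => (x - u₂) ^ (a + 1)) ((a + 1) * (v - u₂) ^ a) v := by
      have := hid.rpow_const (p := a + 1) (Or.inl hvpos.ne')
      simpa [show a + 1 - 1 = a by ring] using this
    have comb := ((d1.const_mul (T - u₂)).div_const a).sub (d2.div_const (a + 1))
    have heq : (T - u₂) * (a * (v - u₂) ^ (a - 1)) / a - (a + 1) * (v - u₂) ^ a / (a + 1)
        = (v - u₂) ^ (a - 1) * (T - v) := by
      have hsplit : (v - u₂) ^ a = (v - u₂) ^ (a - 1) * (v - u₂) := by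
        nth_rewrite 1 [show a = (a - 1) + 1 by ring]
        rw [Real.rpow_add hvpos, Real.rpow_one]
      rw [hsplit]
      field_simp
      ring
    exact heq ▸ comb
  have hcont : ContinuousOn (fun v => (v - u₂) ^ (a - 1) * (T - v)) (uIcc v₁ T) := by
    rw [uIcc_of_le h2]
    apply ContinuousOn.mul
    · apply (continuousOn_id.sub continuousOn_const).rpow_const
      intro x hx
      refine Or.inl ?_
      have hx1 := hx.1
      intro hc
      rw [Pi.sub_apply, sub_eq_zero] at hc
      simp only [id_eq] at hc hx1
      linarith
    · exact continuousOn_const.sub continuousOn_id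
  rw [intervalIntegral.integral_eq_sub_of_hasDerivAt key (hcont.intervalIntegrable)]
  ring

lemma mid_int {a u₁ v₁ T : ℝ} (ha : 0 < a) (h1 : u₁ ≤ v₁) (h2 : v₁ ≤ T) :
    ∫ u₂ in u₁..v₁, ((T - u₂) + 2 * (T - v₁)) *
        ((T - u₂) * ((T - u₂) ^ a - (v₁ - u₂) ^ a) / a
          - ((T - u₂) ^ (a + 1) - (v₁ - u₂) ^ (a + 1)) / (a + 1))
    = (T - u₁) ^ (a + 3) / (a * (a + 1) * (a + 3))
      + 2 * (T - v₁) * (T - u₁) ^ (a + 2) / (a * (a + 1) * (a + 2))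
      - (3 * a + 8) * (T - v₁) ^ (a + 3) / (a * (a + 1) * (a + 2) * (a + 3))
      - (v₁ - u₁) ^ (a + 3) / (a * (a + 1) * (a + 3))
      - (a + 4) * (T - v₁) * (v₁ - u₁) ^ (a + 2) / (a * (a + 1) * (a + 2))
      - 3 * (T - v₁) ^ 2 * (v₁ - u₁) ^ (a + 1) / (a * (a + 1)) := by
  set G : ℝ → ℝ := fun x =>
    -((T - x) ^ (a + 3) / (a * (a + 1) * (a + 3)))
    - 2 * (T - v₁) * (T - x) ^ (a + 2) / (a * (a + 1) * (a + 2))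
    + (v₁ - x) ^ (a + 3) / (a * (a + 1) * (a + 3))
    + (a + 4) * (T - v₁) * (v₁ - x) ^ (a + 2) / (a * (a + 1) * (a + 2))
    + 3 * (T - v₁) ^ 2 * (v₁ - x) ^ (a + 1) / (a * (a + 1)) with hG
  have key : ∀ x ∈ uIcc u₁ v₁,
      HasDerivAt G (((T - x) + 2 * (T - v₁)) *
        ((T - x) * ((T - x) ^ a - (v₁ - x) ^ a) / a
          - ((T - x) ^ (a + 1) - (v₁ - x) ^ (a + 1)) / (a + 1))) x := by
    intro x hx
    rw [uIcc_of_le h1] at hx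
    have hX : (0:ℝ) ≤ T - x := by have := hx.2; linarith
    have hY : (0:ℝ) ≤ v₁ - x := by have := hx.2; linarith
    have hidT : HasDerivAt (fun y : ℝ => T - y) (-1) x := by
      simpa using (hasDerivAt_id x).const_sub T
    have hidV : HasDerivAt (fun y : ℝ => v₁ - y) (-1) x := by
      simpa using (hasDerivAt_id x).const_sub v₁
    have dT3 : HasDerivAt (fun y : ℝ => (T - y) ^ (a + 3)) (-1 * (a + 3) * (T - x) ^ (a + 2)) x := by
      have h := hidT.rpow_const (p := a + 3) (Or.inr (by linarith))
      rwa [show a + 3 - 1 = a + 2 by ring] at h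
    have dT2 : HasDerivAt (fun y : ℝ => (T - y) ^ (a + 2)) (-1 * (a + 2) * (T - x) ^ (a + 1)) x := by
      have h := hidT.rpow_const (p := a + 2) (Or.inr (by linarith))
      rwa [show a + 2 - 1 = a + 1 by ring] at h
    have dV3 : HasDerivAt (fun y : ℝ => (v₁ - y) ^ (a + 3)) (-1 * (a + 3) * (v₁ - x) ^ (a + 2)) x := by
      have h := hidV.rpow_const (p := a + 3) (Or.inr (by linarith))
      rwa [show a + 3 - 1 = a + 2 by ring] at h
    have dV2 : HasDerivAt (fun y : ℝ => (v₁ - y) ^ (a + 2)) (-1 * (a + 2) * (v₁ - x) ^ (a + 1)) x := by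
      have h := hidV.rpow_const (p := a + 2) (Or.inr (by linarith))
      rwa [show a + 2 - 1 = a + 1 by ring] at h
    have dV1 : HasDerivAt (fun y : ℝ => (v₁ - y) ^ (a + 1)) (-1 * (a + 1) * (v₁ - x) ^ a) x := by
      have h := hidV.rpow_const (p := a + 1) (Or.inr (by linarith))
      rwa [show a + 1 - 1 = a by ring] at h
    have comb := (((((dT3.div_const (a * (a + 1) * (a + 3))).neg).sub
        ((dT2.const_mul (2 * (T - v₁))).div_const (a * (a + 1) * (a + 2)))).add
        (dV3.div_const (a * (a + 1) * (a + 3)))).add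
        ((dV2.const_mul ((a + 4) * (T - v₁))).div_const (a * (a + 1) * (a + 2)))).add
        ((dV1.const_mul (3 * (T - v₁) ^ 2)).div_const (a * (a + 1)))
    have heq : -(-1 * (a + 3) * (T - x) ^ (a + 2) / (a * (a + 1) * (a + 3)))
        - 2 * (T - v₁) * (-1 * (a + 2) * (T - x) ^ (a + 1)) / (a * (a + 1) * (a + 2))
        + -1 * (a + 3) * (v₁ - x) ^ (a + 2) / (a * (a + 1) * (a + 3))
        + (a + 4) * (T - v₁) * (-1 * (a + 2) * (v₁ - x) ^ (a + 1)) / (a * (a + 1) * (a + 2))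
        + 3 * (T - v₁) ^ 2 * (-1 * (a + 1) * (v₁ - x) ^ a) / (a * (a + 1))
        = ((T - x) + 2 * (T - v₁)) *
          ((T - x) * ((T - x) ^ a - (v₁ - x) ^ a) / a
            - ((T - x) ^ (a + 1) - (v₁ - x) ^ (a + 1)) / (a + 1)) := by
      have hX1 : (T - x) ^ (a + 1) = (T - x) ^ a * (T - x) := by
        rw [Real.rpow_add' hX (by linarith), Real.rpow_one]
      have hX2 : (T - x) ^ (a + 2) = (T - x) ^ a * (T - x) * (T - x) := by
        rw [show a + 2 = (a + 1) + 1 by ring, Real.rpow_add' hX (by linarith),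
          Real.rpow_one, hX1]
      have hY1 : (v₁ - x) ^ (a + 1) = (v₁ - x) ^ a * (v₁ - x) := by
        rw [Real.rpow_add' hY (by linarith), Real.rpow_one]
      have hY2 : (v₁ - x) ^ (a + 2) = (v₁ - x) ^ a * (v₁ - x) * (v₁ - x) := by
        rw [show a + 2 = (a + 1) + 1 by ring, Real.rpow_add' hY (by linarith),
          Real.rpow_one, hY1]
      rw [hX2, hX1, hY2, hY1]
      field_simp
      ring
    exact heq ▸ comb
  have hcont : ContinuousOn (fun x => ((T - x) + 2 * (T - v₁)) *
      ((T - x) * ((T - x) ^ a - (v₁ - x) ^ a) / a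
        - ((T - x) ^ (a + 1) - (v₁ - x) ^ (a + 1)) / (a + 1))) (uIcc u₁ v₁) := by
    have cT : ContinuousOn (fun x : ℝ => T - x) (uIcc u₁ v₁) :=
      continuousOn_const.sub continuousOn_id
    have cV : ContinuousOn (fun x : ℝ => v₁ - x) (uIcc u₁ v₁) :=
      continuousOn_const.sub continuousOn_id
    apply ContinuousOn.mul
    · exact cT.add continuousOn_const
    · apply ContinuousOn.sub
      · exact ((cT.mul ((cT.rpow_const (fun x _ => Or.inr (by linarith))).sub
          (cV.rpow_const (fun x _ => Or.inr (by linarith))))).div_const a)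
      · exact (((cT.rpow_const (fun x _ => Or.inr (by linarith))).sub
          (cV.rpow_const (fun x _ => Or.inr (by linarith)))).div_const (a + 1))
  rw [intervalIntegral.integral_eq_sub_of_hasDerivAt key (hcont.intervalIntegrable)]
  simp only [hG, sub_self, Real.zero_rpow (show a + 3 ≠ 0 by positivity),
    Real.zero_rpow (show a + 2 ≠ 0 by positivity), Real.zero_rpow (show a + 1 ≠ 0 by positivity)]
  have hS : (0:ℝ) ≤ T - v₁ := by linarith
  have hS3 : (T - v₁) ^ (a + 3) = (T - v₁) ^ (a + 2) * (T - v₁) := by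
    rw [show a + 3 = (a + 2) + 1 by ring, Real.rpow_add' hS (by linarith), Real.rpow_one]
  rw [hS3]
  field_simp
  ring

lemma ae_ne_real (c : ℝ) : ∀ᵐ x ∂(volume : Measure ℝ), x ≠ c := by
  have h0 : (volume : Measure ℝ) {c} = 0 := measure_singleton c
  rw [MeasureTheory.ae_iff]
  simpa using h0

set_option maxHeartbeats 4000000 in
/-- For `1/2 < H < 1` and `T > 0`, the iterated integral over
the simplex `{0 ≤ u₁ ≤ u₂ ≤ v₁ ≤ v₂ ≤ T}` of
`4(H(2H-1))² (v₁-u₁)^(2H-2)(v₂-u₂)^(2H-2) [(T-u₂)(T-v₂) + 2(T-v₁)(T-v₂)]`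
equals `((8H²+14H-1)/(4(4H+1)(2H+1)(4H-1)) - ((6H+5)/(2H+1)) ℬ(2H+1,2H+2)) T^(4H+2)`. -/
theorem integral_simplex_I2 (H T : ℝ) (hH : 1 / 2 < H) (hH1 : H < 1) (hT : 0 < T) :
    (∫ u₁ in (0 : ℝ)..T, ∫ v₁ in u₁..T, ∫ u₂ in u₁..v₁, ∫ v₂ in v₁..T,
        4 * (H * (2 * H - 1)) ^ 2 * (v₁ - u₁) ^ (2 * H - 2) * (v₂ - u₂) ^ (2 * H - 2) *
          ((T - u₂) * (T - v₂) + 2 * (T - v₁) * (T - v₂)))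
      = ((8 * H ^ 2 + 14 * H - 1) / (4 * (4 * H + 1) * (2 * H + 1) * (4 * H - 1))
          - (6 * H + 5) / (2 * H + 1) * betaFn (2 * H + 1) (2 * H + 2)) * T ^ (4 * H + 2) := by
  obtain ⟨a, ha⟩ : ∃ a : ℝ, a = 2 * H - 1 := ⟨_, rfl⟩
  have ha0 : 0 < a := by rw [ha]; linarith
  have hexp : (2 * H - 2 : ℝ) = a - 1 := by rw [ha]; ring
  rw [hexp]
  set Cc : ℝ := 4 * (H * (2 * H - 1)) ^ 2 with hCc
  set κ : ℝ := Cc *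
    (1 / (a * (a * (a + 1) * (a + 3)))
     + 2 * betaFn a 2 / (a * (a + 1) * (a + 2))
     - (3 * a + 8) * betaFn a (a + 4) / (a * (a + 1) * (a + 2) * (a + 3))
     - 1 / ((2 * a + 3) * (a * (a + 1) * (a + 3)))
     - (a + 4) * betaFn (2 * a + 2) 2 / (a * (a + 1) * (a + 2))
     - 3 * betaFn (2 * a + 1) 3 / (a * (a + 1))) with hκ
  have level1 : ∀ᵐ u₁ ∂(volume : Measure ℝ), u₁ ∈ Set.uIoc (0:ℝ) T →
      (∫ v₁ in u₁..T, ∫ u₂ in u₁..v₁, ∫ v₂ in v₁..T,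
        Cc * (v₁ - u₁) ^ (a - 1) * (v₂ - u₂) ^ (a - 1) *
          ((T - u₂) * (T - v₂) + 2 * (T - v₁) * (T - v₂)))
      = κ * (T - u₁) ^ (2 * a + 3) := by
    filter_upwards [ae_ne_real T] with u₁ hu₁ne hmem
    rw [Set.uIoc_of_le hT.le] at hmem
    have hu₁T : u₁ < T := lt_of_le_of_ne hmem.2 hu₁ne
    have hB : ∀ᵐ v₁ ∂(volume : Measure ℝ), v₁ ∈ Set.uIoc u₁ T →
        (∫ u₂ in u₁..v₁, ∫ v₂ in v₁..T,
          Cc * (v₁ - u₁) ^ (a - 1) * (v₂ - u₂) ^ (a - 1) *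
            ((T - u₂) * (T - v₂) + 2 * (T - v₁) * (T - v₂)))
        = (Cc * (T - u₁) ^ (a + 3) / (a * (a + 1) * (a + 3))) * (v₁ - u₁) ^ (a - 1)
          + ((2 * Cc * (T - u₁) ^ (a + 2) / (a * (a + 1) * (a + 2))) *
              ((v₁ - u₁) ^ (a - 1) * (T - v₁) ^ ((2:ℝ) - 1))
          + ((-(Cc * (3 * a + 8) / (a * (a + 1) * (a + 2) * (a + 3)))) *
              ((v₁ - u₁) ^ (a - 1) * (T - v₁) ^ ((a + 4) - 1))
          + ((-(Cc / (a * (a + 1) * (a + 3)))) * (v₁ - u₁) ^ ((2 * a + 3) - 1)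
          + ((-(Cc * (a + 4) / (a * (a + 1) * (a + 2)))) *
              ((v₁ - u₁) ^ ((2 * a + 2) - 1) * (T - v₁) ^ ((2:ℝ) - 1))
          + (-(3 * Cc / (a * (a + 1)))) *
              ((v₁ - u₁) ^ ((2 * a + 1) - 1) * (T - v₁) ^ ((3:ℝ) - 1)))))) := by
      refine Filter.Eventually.of_forall (fun v₁ hv₁ => ?_)
      rw [Set.uIoc_of_le hmem.2] at hv₁
      have hu₁v₁ : u₁ < v₁ := hv₁.1
      have hv₁T : v₁ ≤ T := hv₁.2
      have hB1 : ∀ᵐ u₂ ∂(volume : Measure ℝ), u₂ ∈ Set.uIoc u₁ v₁ →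
          (∫ v₂ in v₁..T,
            Cc * (v₁ - u₁) ^ (a - 1) * (v₂ - u₂) ^ (a - 1) *
              ((T - u₂) * (T - v₂) + 2 * (T - v₁) * (T - v₂)))
          = (Cc * (v₁ - u₁) ^ (a - 1)) * (((T - u₂) + 2 * (T - v₁)) *
              ((T - u₂) * ((T - u₂) ^ a - (v₁ - u₂) ^ a) / a
                - ((T - u₂) ^ (a + 1) - (v₁ - u₂) ^ (a + 1)) / (a + 1))) := by
        filter_upwards [ae_ne_real v₁] with u₂ hu₂ne hu₂mem
        rw [Set.uIoc_of_le hu₁v₁.le] at hu₂mem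
        have hu₂v₁ : u₂ < v₁ := lt_of_le_of_ne hu₂mem.2 hu₂ne
        have hcg := intervalIntegral.integral_congr (a := v₁) (b := T) (μ := volume)
          (f := fun v₂ => Cc * (v₁ - u₁) ^ (a - 1) * (v₂ - u₂) ^ (a - 1) *
              ((T - u₂) * (T - v₂) + 2 * (T - v₁) * (T - v₂)))
          (g := fun v₂ => (Cc * (v₁ - u₁) ^ (a - 1) * ((T - u₂) + 2 * (T - v₁))) *
              ((v₂ - u₂) ^ (a - 1) * (T - v₂)))
          (fun v₂ _ => by ring)
        rw [hcg, intervalIntegral.integral_const_mul, inner_int ha0 hu₂v₁ hv₁T]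
        ring
      rw [intervalIntegral.integral_congr_ae hB1, intervalIntegral.integral_const_mul,
        mid_int ha0 hu₁v₁.le hv₁T]
      have hW : 0 < v₁ - u₁ := by linarith
      have e4 : (T - v₁) ^ ((2:ℝ) - 1) = T - v₁ := by
        rw [show ((2:ℝ) - 1) = 1 by norm_num, Real.rpow_one]
      have e5 : (T - v₁) ^ ((3:ℝ) - 1) = (T - v₁) ^ (2:ℕ) := by
        rw [show ((3:ℝ) - 1) = ((2:ℕ) : ℝ) by norm_num, Real.rpow_natCast]
      have e6 : (T - v₁) ^ ((a + 4) - 1) = (T - v₁) ^ (a + 3) := by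
        rw [show (a + 4) - 1 = a + 3 by ring]
      have r1 : (v₁ - u₁) ^ (a + 1) = (v₁ - u₁) ^ (a - 1) * ((v₁ - u₁) * (v₁ - u₁)) := by
        rw [show a + 1 = ((a - 1) + 1) + 1 by ring, Real.rpow_add hW, Real.rpow_add hW,
          Real.rpow_one]
        ring
      have r2 : (v₁ - u₁) ^ (a + 2) = (v₁ - u₁) ^ (a - 1) * ((v₁ - u₁) * (v₁ - u₁) * (v₁ - u₁)) := by
        rw [show a + 2 = ((a - 1) + 1) + 2 by ring, Real.rpow_add hW, Real.rpow_add hW,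
          Real.rpow_one, show ((2:ℝ)) = ((2:ℕ) : ℝ) by norm_num, Real.rpow_natCast]
        ring
      have r3 : (v₁ - u₁) ^ (a + 3)
          = (v₁ - u₁) ^ (a - 1) * ((v₁ - u₁) * (v₁ - u₁) * (v₁ - u₁) * (v₁ - u₁)) := by
        rw [show a + 3 = ((a - 1) + 1) + 3 by ring, Real.rpow_add hW, Real.rpow_add hW,
          Real.rpow_one, show ((3:ℝ)) = ((3:ℕ) : ℝ) by norm_num, Real.rpow_natCast]
        ring
      have s1 : (v₁ - u₁) ^ ((2 * a + 3) - 1) = (v₁ - u₁) ^ (a - 1) * (v₁ - u₁) ^ (a + 3) := by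
        rw [show (2 * a + 3) - 1 = (a - 1) + (a + 3) by ring, Real.rpow_add hW]
      have s2 : (v₁ - u₁) ^ ((2 * a + 2) - 1) = (v₁ - u₁) ^ (a - 1) * (v₁ - u₁) ^ (a + 2) := by
        rw [show (2 * a + 2) - 1 = (a - 1) + (a + 2) by ring, Real.rpow_add hW]
      have s3 : (v₁ - u₁) ^ ((2 * a + 1) - 1) = (v₁ - u₁) ^ (a - 1) * (v₁ - u₁) ^ (a + 1) := by
        rw [show (2 * a + 1) - 1 = (a - 1) + (a + 1) by ring, Real.rpow_add hW]
      rw [e4, e5, e6, s1, s2, s3, r1, r2, r3]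
      ring
    rw [intervalIntegral.integral_congr_ae hB]
    have hb1 : IntervalIntegrable (fun v₁ : ℝ => (v₁ - u₁) ^ (a - 1)) volume u₁ T := by
      simpa using (intervalIntegrable_rpow' (a := 0) (b := T - u₁)
        (show (-1:ℝ) < a - 1 by linarith)).comp_sub_right u₁
    have hb4 : IntervalIntegrable (fun v₁ : ℝ => (v₁ - u₁) ^ ((2 * a + 3) - 1)) volume u₁ T := by
      simpa using (intervalIntegrable_rpow' (a := 0) (b := T - u₁)
        (show (-1:ℝ) < (2 * a + 3) - 1 by linarith)).comp_sub_right u₁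
    have hb2 := beta_integrable (p := a) (q := 2) u₁ T ha0 one_le_two
    have hb3 := beta_integrable (p := a) (q := a + 4) u₁ T ha0 (by linarith)
    have hb5 := beta_integrable (p := 2 * a + 2) (q := 2) u₁ T (by linarith) one_le_two
    have hb6 := beta_integrable (p := 2 * a + 1) (q := 3) u₁ T (by linarith) (by norm_num)
    have i1 := hb1.const_mul (Cc * (T - u₁) ^ (a + 3) / (a * (a + 1) * (a + 3)))
    have i2 := hb2.const_mul (2 * Cc * (T - u₁) ^ (a + 2) / (a * (a + 1) * (a + 2)))
    have i3 := hb3.const_mul (-(Cc * (3 * a + 8) / (a * (a + 1) * (a + 2) * (a + 3))))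
    have i4 := hb4.const_mul (-(Cc / (a * (a + 1) * (a + 3))))
    have i5 := hb5.const_mul (-(Cc * (a + 4) / (a * (a + 1) * (a + 2))))
    have i6 := hb6.const_mul (-(3 * Cc / (a * (a + 1))))
    rw [intervalIntegral.integral_add i1 (i2.add (i3.add (i4.add (i5.add i6)))),
      intervalIntegral.integral_add i2 (i3.add (i4.add (i5.add i6))),
      intervalIntegral.integral_add i3 (i4.add (i5.add i6)),
      intervalIntegral.integral_add i4 (i5.add i6),
      intervalIntegral.integral_add i5 i6]
    simp only [intervalIntegral.integral_const_mul]
    rw [integral_pow_shift (show (-1:ℝ) < a - 1 by linarith) hu₁T.le,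
      integral_pow_shift (show (-1:ℝ) < (2 * a + 3) - 1 by linarith) hu₁T.le,
      integral_beta_kernel ha0 (show (0:ℝ) < 2 by norm_num) hu₁T,
      integral_beta_kernel ha0 (show (0:ℝ) < a + 4 by linarith) hu₁T,
      integral_beta_kernel (show (0:ℝ) < 2 * a + 2 by linarith) (show (0:ℝ) < 2 by norm_num) hu₁T,
      integral_beta_kernel (show (0:ℝ) < 2 * a + 1 by linarith) (show (0:ℝ) < 3 by norm_num) hu₁T]
    have hX : 0 < T - u₁ := by linarith
    rw [show (a - 1) + 1 = a by ring, show ((2 * a + 3) - 1) + 1 = 2 * a + 3 by ring,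
      show a + 2 - 1 = a + 1 by ring, show a + (a + 4) - 1 = 2 * a + 3 by ring,
      show 2 * a + 2 + 2 - 1 = 2 * a + 3 by ring, show 2 * a + 1 + 3 - 1 = 2 * a + 3 by ring]
    have q1 : (T - u₁) ^ (a + 1) = (T - u₁) ^ a * (T - u₁) := by
      rw [Real.rpow_add hX, Real.rpow_one]
    have q2 : (T - u₁) ^ (a + 2) = (T - u₁) ^ a * ((T - u₁) * (T - u₁)) := by
      rw [show a + 2 = (a + 1) + 1 by ring, Real.rpow_add hX, Real.rpow_one, q1]
      ring
    have q3 : (T - u₁) ^ (a + 3) = (T - u₁) ^ a * ((T - u₁) * (T - u₁) * (T - u₁)) := by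
      rw [show a + 3 = (a + 2) + 1 by ring, Real.rpow_add hX, Real.rpow_one, q2]
      ring
    have q4 : (T - u₁) ^ (2 * a + 3)
        = (T - u₁) ^ a * (T - u₁) ^ a * ((T - u₁) * (T - u₁) * (T - u₁)) := by
      rw [show 2 * a + 3 = a + (a + 3) by ring, Real.rpow_add hX, q3]
      ring
    rw [hκ, q4, q3, q2, q1]
    have h1 : a ≠ 0 := ha0.ne'
    have h2 : a + 1 ≠ 0 := by positivity
    have h3 : a + 2 ≠ 0 := by positivity
    have h4 : a + 3 ≠ 0 := by positivity
    have h5 : 2 * a + 3 ≠ 0 := by positivity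
    field_simp
    ring
  rw [intervalIntegral.integral_congr_ae level1, intervalIntegral.integral_const_mul,
    integral_pow_Tsub (show (0:ℝ) ≤ 2 * a + 3 by linarith)]
  rw [show (2 * a + 3) + 1 = 2 * a + 4 by ring]
  rw [show 8 * H ^ 2 + 14 * H - 1 = 2 * a ^ 2 + 11 * a + 8 by rw [ha]; ring,
    show 4 * H + 1 = 2 * a + 3 by rw [ha]; ring,
    show (2 : ℝ) * H + 1 = a + 2 by rw [ha]; ring,
    show 4 * H - 1 = 2 * a + 1 by rw [ha]; ring,
    show (2 : ℝ) * H + 2 = a + 3 by rw [ha]; ring,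
    show 6 * H + 5 = 3 * a + 8 by rw [ha]; ring,
    show 4 * H + 2 = 2 * a + 4 by rw [ha]; ring]
  rw [hκ, betaFn_two ha0, betaFn_two (show (0:ℝ) < 2 * a + 2 by linarith),
    betaFn_three (show (0:ℝ) < 2 * a + 1 by linarith), betaFn_ratio ha0,
    hCc, show 4 * (H * (2 * H - 1)) ^ 2 = ((a + 1) * a) ^ 2 by rw [ha]; ring]
  have n1 : a ≠ 0 := ha0.ne'
  have n2 : a + 1 ≠ 0 := by positivity
  have n3 : a + 2 ≠ 0 := by positivity
  have n4 : a + 3 ≠ 0 := by positivity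
  have n5 : 2 * a + 1 ≠ 0 := by positivity
  have n6 : 2 * a + 2 ≠ 0 := by positivity
  have n7 : 2 * a + 3 ≠ 0 := by positivity
  have n8 : 2 * a + 4 ≠ 0 := by positivity
  field_simp
  ring
end

section
/- Let 1/2 < H < 1 and T > 0. Then the iterated integral over the simplex {0 ≤ u₁ ≤ v₁ ≤ u₂ ≤ v₂ ≤ T} of 4(H(2H−1))² (v₁−u₁)^{2H−2}(v₂−u₂)^{2H−2} [ 2(T−u₂)(T−v₂) + (T−v₁)(T−v₂) ] dv₂ du₂ dv₁ du₁ equals ((6H+4)/(2H+1)) · ℬ(2H+1, 2H+2) · T^{4H+2}. -/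
open MeasureTheory intervalIntegral Set Real Filter

/-- `b^(p+1) = b^p * b` for nonnegative `b` with `p + 1 > 0`. -/
lemma rpow_succ' {b : ℝ} (hb : 0 ≤ b) {p : ℝ} (hp : 0 < p + 1) :
    b ^ (p + 1) = b ^ p * b := by
  rcases eq_or_lt_of_le hb with h | h
  · rw [← h, Real.zero_rpow hp.ne', mul_zero]
  · rw [Real.rpow_add_one h.ne' p]

/-- Integrability of the Beta integrand. -/
lemma betaIntegrable {x y : ℝ} (hx : 0 < x) (hy : 0 < y) :
    IntervalIntegrable (fun t : ℝ => t ^ (x - 1) * (1 - t) ^ (y - 1)) volume 0 1 := by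
  apply IntervalIntegrable.trans (b := (1/2 : ℝ))
  · apply IntervalIntegrable.mul_continuousOn (intervalIntegrable_rpow' (by linarith))
    apply ContinuousOn.rpow_const (continuousOn_const.sub continuousOn_id)
    intro t ht
    rw [uIcc_of_le (by norm_num : (0:ℝ) ≤ 1/2)] at ht
    refine Or.inl ?_
    intro hcon
    have h' : (1:ℝ) - t = 0 := hcon
    linarith [ht.2]
  · have h0 : IntervalIntegrable (fun t : ℝ => t ^ (y - 1)) volume 0 (1/2) :=
      intervalIntegrable_rpow' (by linarith)
    have h1 := (h0.comp_sub_left 1).symm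
    rw [show (1:ℝ) - 0 = 1 by norm_num, show (1:ℝ) - 1/2 = 1/2 by norm_num] at h1
    refine IntervalIntegrable.continuousOn_mul h1 ?_
    apply ContinuousOn.rpow_const continuousOn_id
    intro t ht
    rw [uIcc_of_le (by norm_num : (1/2:ℝ) ≤ 1)] at ht
    refine Or.inl ?_
    intro hcon
    have h' : t = 0 := hcon
    linarith [ht.1]

/-- Generic Beta-type integral on an interval. -/
lemma intA {a b : ℝ} (ha : -1 < a) (hb : 0 ≤ b) {c d : ℝ} (hcd : c ≤ d) :
    (∫ x in c..d, (x - c) ^ a * (d - x) ^ b)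
      = (d - c) ^ (a + b + 1) * betaFn (a + 1) (b + 1) := by
  rcases eq_or_lt_of_le hcd with rfl | h
  · rw [intervalIntegral.integral_same, sub_self,
      Real.zero_rpow (by linarith : a + b + 1 ≠ 0), zero_mul]
  · have hL0 : (0:ℝ) < d - c := by linarith
    have h1 := intervalIntegral.integral_comp_sub_right (a := c) (b := d)
      (fun y => y ^ a * ((d - c) - y) ^ b) c
    simp only [sub_self, sub_sub_sub_cancel_right] at h1
    have h2 := intervalIntegral.integral_comp_mul_left (a := (0:ℝ)) (b := 1)
      (fun y : ℝ => y ^ a * ((d - c) - y) ^ b) hL0.ne'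
    simp only [mul_zero, mul_one, smul_eq_mul] at h2
    have h2' : (∫ y in (0:ℝ)..(d - c), y ^ a * ((d - c) - y) ^ b)
        = (d - c) * ∫ t in (0:ℝ)..1, ((d - c) * t) ^ a * ((d - c) - (d - c) * t) ^ b := by
      rw [h2, ← mul_assoc, mul_inv_cancel₀ hL0.ne', one_mul]
    have h3 : (∫ t in (0:ℝ)..1, ((d - c) * t) ^ a * ((d - c) - (d - c) * t) ^ b)
        = ((d - c) ^ a * (d - c) ^ b) * ∫ t in (0:ℝ)..1, t ^ a * (1 - t) ^ b := by
      rw [← intervalIntegral.integral_const_mul]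
      apply intervalIntegral.integral_congr
      intro t ht
      rw [uIcc_of_le (by norm_num : (0:ℝ) ≤ 1)] at ht
      simp only
      rw [Real.mul_rpow hL0.le ht.1, show (d - c) - (d - c) * t = (d - c) * (1 - t) by ring,
        Real.mul_rpow hL0.le (by linarith [ht.2])]
      ring
    have hbeta : betaFn (a + 1) (b + 1) = ∫ t in (0:ℝ)..1, t ^ a * (1 - t) ^ b := by
      simp [betaFn]
    have hL4 : (d - c) ^ (a + b + 1) = (d - c) * ((d - c) ^ a * (d - c) ^ b) := by
      rw [show a + b + 1 = a + (b + 1) by ring, Real.rpow_add hL0,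
        Real.rpow_add hL0, Real.rpow_one]
      ring
    rw [h1, h2', h3, hbeta, hL4]
    ring

/-- Simple power integral. -/
lemma intB {p : ℝ} (hp : -1 < p) (c d : ℝ) :
    (∫ x in c..d, (d - x) ^ p) = (d - c) ^ (p + 1) / (p + 1) := by
  rw [intervalIntegral.integral_comp_sub_left (fun y => y ^ p) d, sub_self,
    integral_rpow (Or.inl hp), Real.zero_rpow (by linarith : p + 1 ≠ 0), sub_zero]

/-- Beta recurrence via integration by parts. -/
lemma betaFn_rec {x y : ℝ} (hx : 0 < x) (hy : 0 < y) :
    x * betaFn x (y + 1) = y * betaFn (x + 1) y := by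
  have I1 : IntervalIntegrable (fun t : ℝ => t ^ (x - 1) * (1 - t) ^ y) volume 0 1 := by
    have := betaIntegrable hx (by linarith : (0:ℝ) < y + 1)
    simpa using this
  have I2 : IntervalIntegrable (fun t : ℝ => t ^ x * (1 - t) ^ (y - 1)) volume 0 1 := by
    have := betaIntegrable (by linarith : (0:ℝ) < x + 1) hy
    simpa using this
  have hderiv : ∀ t ∈ Ioo (0:ℝ) 1,
      HasDerivAt (fun t : ℝ => t ^ x * (1 - t) ^ y)
        (x * (t ^ (x - 1) * (1 - t) ^ y) - y * (t ^ x * (1 - t) ^ (y - 1))) t := by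
    intro t ht
    have d1 : HasDerivAt (fun t : ℝ => t ^ x) (x * t ^ (x - 1)) t :=
      Real.hasDerivAt_rpow_const (Or.inl ht.1.ne')
    have hne : (1:ℝ) - t ≠ 0 := by
      intro h
      have : (1:ℝ) = t := by linarith [sub_eq_zero.mp h]
      linarith [ht.2]
    have d2 : HasDerivAt (fun t : ℝ => (1 - t) ^ y)
        ((y * (1 - t) ^ (y - 1)) * (0 - 1)) t := by
      have hg : HasDerivAt (fun s : ℝ => s ^ y) (y * (1 - t) ^ (y - 1)) (1 - t) :=
        Real.hasDerivAt_rpow_const (Or.inl hne)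
      exact hg.comp t ((hasDerivAt_const t (1:ℝ)).sub (hasDerivAt_id t))
    have : HasDerivAt (fun t : ℝ => t ^ x * (1 - t) ^ y) _ t := d1.mul d2
    convert this using 1
    ring
  have hint : IntervalIntegrable
      (fun t : ℝ => x * (t ^ (x - 1) * (1 - t) ^ y) - y * (t ^ x * (1 - t) ^ (y - 1)))
      volume 0 1 := (I1.const_mul x).sub (I2.const_mul y)
  have ta : Tendsto (fun t : ℝ => t ^ x * (1 - t) ^ y) (nhdsWithin 0 (Ioi 0)) (nhds 0) := by
    have hc : ContinuousAt (fun t : ℝ => t ^ x * (1 - t) ^ y) 0 := by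
      apply ContinuousAt.mul
      · exact ContinuousAt.rpow_const continuousAt_id (Or.inr hx.le)
      · exact ContinuousAt.rpow_const (continuousAt_const.sub continuousAt_id)
          (Or.inl (by norm_num))
    refine Tendsto.mono_left ?_ nhdsWithin_le_nhds
    simpa [Real.zero_rpow hx.ne'] using hc.tendsto
  have tb : Tendsto (fun t : ℝ => t ^ x * (1 - t) ^ y) (nhdsWithin 1 (Iio 1)) (nhds 0) := by
    have hc : ContinuousAt (fun t : ℝ => t ^ x * (1 - t) ^ y) 1 := by
      apply ContinuousAt.mul
      · exact ContinuousAt.rpow_const continuousAt_id (Or.inl (by norm_num))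
      · exact ContinuousAt.rpow_const (continuousAt_const.sub continuousAt_id)
          (Or.inr hy.le)
    refine Tendsto.mono_left ?_ nhdsWithin_le_nhds
    simpa [Real.zero_rpow hy.ne'] using hc.tendsto
  have key := intervalIntegral.integral_eq_sub_of_hasDerivAt_of_tendsto
    (zero_lt_one) hderiv hint ta tb
  rw [intervalIntegral.integral_sub (I1.const_mul x) (I2.const_mul y),
    intervalIntegral.integral_const_mul, intervalIntegral.integral_const_mul] at key
  have hb1 : betaFn x (y + 1) = ∫ t in (0:ℝ)..1, t ^ (x - 1) * (1 - t) ^ y := by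
    simp [betaFn]
  have hb2 : betaFn (x + 1) y = ∫ t in (0:ℝ)..1, t ^ x * (1 - t) ^ (y - 1) := by
    simp [betaFn]
  rw [hb1, hb2]
  linarith [key]

/-- Pascal-type identity for Beta. -/
lemma betaFn_pascal {x y : ℝ} (hx : 0 < x) (hy : 0 < y) :
    betaFn x y = betaFn x (y + 1) + betaFn (x + 1) y := by
  have I1 : IntervalIntegrable (fun t : ℝ => t ^ (x - 1) * (1 - t) ^ y) volume 0 1 := by
    have := betaIntegrable hx (by linarith : (0:ℝ) < y + 1); simpa using this
  have I2 : IntervalIntegrable (fun t : ℝ => t ^ x * (1 - t) ^ (y - 1)) volume 0 1 := by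
    have := betaIntegrable (by linarith : (0:ℝ) < x + 1) hy; simpa using this
  have h : betaFn x (y + 1) + betaFn (x + 1) y
      = ∫ t in (0:ℝ)..1, (t ^ (x - 1) * (1 - t) ^ y + t ^ x * (1 - t) ^ (y - 1)) := by
    rw [intervalIntegral.integral_add I1 I2]
    simp [betaFn]
  rw [h]
  apply intervalIntegral.integral_congr
  intro t ht
  rw [uIcc_of_le (by norm_num : (0:ℝ) ≤ 1)] at ht
  obtain ⟨h0, h1⟩ := ht
  have e1 : (1 - t) ^ y = (1 - t) ^ (y - 1) * (1 - t) := by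
    rw [← rpow_succ' (by linarith : (0:ℝ) ≤ 1 - t) (by linarith : (0:ℝ) < (y - 1) + 1),
      sub_add_cancel]
  have e2 : t ^ x = t ^ (x - 1) * t := by
    rw [← rpow_succ' h0 (by linarith : (0:ℝ) < (x - 1) + 1), sub_add_cancel]
  simp only
  rw [e1, e2]
  ring

/-- `ℬ(x, 2) = 1/x - 1/(x+1)`. -/
lemma betaFn_s2 {x : ℝ} (hx : 0 < x) : betaFn x 2 = 1 / x - 1 / (x + 1) := by
  have hcongr : Set.EqOn (fun t : ℝ => t ^ (x - 1) * (1 - t) ^ ((2:ℝ) - 1))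
      (fun t : ℝ => t ^ (x - 1) - t ^ x) (Set.uIcc 0 1) := by
    intro t ht
    rw [uIcc_of_le (by norm_num : (0:ℝ) ≤ 1)] at ht
    have e2 : t ^ x = t ^ (x - 1) * t := by
      rw [← rpow_succ' ht.1 (by linarith : (0:ℝ) < (x - 1) + 1), sub_add_cancel]
    simp only
    rw [show (2:ℝ) - 1 = 1 by norm_num, Real.rpow_one, e2]
    ring
  have h1 : betaFn x 2 = ∫ t in (0:ℝ)..1, (t ^ (x - 1) - t ^ x) :=
    intervalIntegral.integral_congr hcongr
  rw [h1, intervalIntegral.integral_sub (intervalIntegrable_rpow' (by linarith))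
    (intervalIntegrable_rpow' (by linarith)),
    integral_rpow (Or.inl (by linarith : (-1:ℝ) < x - 1)),
    integral_rpow (Or.inl (by linarith : (-1:ℝ) < x)), sub_add_cancel]
  rw [Real.one_rpow, Real.one_rpow, Real.zero_rpow hx.ne',
    Real.zero_rpow (by linarith : x + 1 ≠ 0)]
  field_simp
  norm_num

/-- For `1/2 < H < 1` and `T > 0`, the iterated integral over
the simplex `{0 ≤ u₁ ≤ v₁ ≤ u₂ ≤ v₂ ≤ T}` of
`4(H(2H-1))² (v₁-u₁)^(2H-2)(v₂-u₂)^(2H-2) [2(T-u₂)(T-v₂) + (T-v₁)(T-v₂)]`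
equals `((6H+4)/(2H+1)) ℬ(2H+1,2H+2) T^(4H+2)`. -/
theorem integral_simplex_I3 (H T : ℝ) (hH : 1 / 2 < H) (hH1 : H < 1) (hT : 0 < T) :
    (∫ u₁ in (0 : ℝ)..T, ∫ v₁ in u₁..T, ∫ u₂ in v₁..T, ∫ v₂ in u₂..T,
        4 * (H * (2 * H - 1)) ^ 2 * (v₁ - u₁) ^ (2 * H - 2) * (v₂ - u₂) ^ (2 * H - 2) *
          (2 * (T - u₂) * (T - v₂) + (T - v₁) * (T - v₂)))
      = (6 * H + 4) / (2 * H + 1) * betaFn (2 * H + 1) (2 * H + 2) * T ^ (4 * H + 2) := by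
  have h2H1 : (0:ℝ) < 2 * H - 1 := by linarith
  have ha : (-1:ℝ) < 2 * H - 2 := by linarith
  set B1 : ℝ := betaFn (2 * H - 1) 2 with hB1def
  set B2 : ℝ := betaFn (2 * H - 1) (2 * H + 3) with hB2def
  set c₂ : ℝ := 2 / (2 * H + 2) + 1 / (2 * H + 1) with hc2def
  have hB2 : B2 * ((2 * H - 1) * (2 * H))
      = 2 * (2 * H + 2) * (2 * H + 1) * betaFn (2 * H + 1) (2 * H + 2) := by
    have r1 := betaFn_rec (x := 2 * H - 1) (y := 2 * H + 2) h2H1 (by linarith)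
    have r2 := betaFn_rec (x := 2 * H) (y := 2 * H + 1) (by linarith) (by linarith)
    have r3 := betaFn_rec (x := 2 * H + 1) (y := 2 * H + 1) (by linarith) (by linarith)
    have p := betaFn_pascal (x := 2 * H + 1) (y := 2 * H + 1) (by linarith) (by linarith)
    rw [hB2def]
    ring_nf at r1 r2 r3 p ⊢
    linear_combination (2 * H) * r1 + (2 * H + 2) * r2
      + ((2 * H + 2) * (2 * H + 1)) * p - (2 * H + 2) * r3
  have L1 : (∫ u₁ in (0 : ℝ)..T, ∫ v₁ in u₁..T, ∫ u₂ in v₁..T, ∫ v₂ in u₂..T,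
        4 * (H * (2 * H - 1)) ^ 2 * (v₁ - u₁) ^ (2 * H - 2) * (v₂ - u₂) ^ (2 * H - 2) *
          (2 * (T - u₂) * (T - v₂) + (T - v₁) * (T - v₂)))
      = ∫ u₁ in (0 : ℝ)..T,
          (4 * (H * (2 * H - 1)) ^ 2 * B1 * c₂ * B2) * (T - u₁) ^ (4 * H + 1) := by
    apply intervalIntegral.integral_congr
    intro u₁ hu₁
    rw [uIcc_of_le hT.le] at hu₁
    have hu₁T : u₁ ≤ T := hu₁.2
    simp only
    have L2 : (∫ v₁ in u₁..T, ∫ u₂ in v₁..T, ∫ v₂ in u₂..T,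
          4 * (H * (2 * H - 1)) ^ 2 * (v₁ - u₁) ^ (2 * H - 2) * (v₂ - u₂) ^ (2 * H - 2) *
            (2 * (T - u₂) * (T - v₂) + (T - v₁) * (T - v₂)))
        = ∫ v₁ in u₁..T, (4 * (H * (2 * H - 1)) ^ 2 * B1 * c₂) *
            ((v₁ - u₁) ^ (2 * H - 2) * (T - v₁) ^ (2 * H + 2)) := by
      apply intervalIntegral.integral_congr
      intro v₁ hv₁
      rw [uIcc_of_le hu₁T] at hv₁
      have hv₁T : v₁ ≤ T := hv₁.2
      simp only
      have L3 : (∫ u₂ in v₁..T, ∫ v₂ in u₂..T,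
            4 * (H * (2 * H - 1)) ^ 2 * (v₁ - u₁) ^ (2 * H - 2) * (v₂ - u₂) ^ (2 * H - 2) *
              (2 * (T - u₂) * (T - v₂) + (T - v₁) * (T - v₂)))
          = ∫ u₂ in v₁..T, (4 * (H * (2 * H - 1)) ^ 2 * (v₁ - u₁) ^ (2 * H - 2) * B1) *
              ((2 * (T - u₂) + (T - v₁)) * (T - u₂) ^ (2 * H)) := by
        apply intervalIntegral.integral_congr
        intro u₂ hu₂
        rw [uIcc_of_le hv₁T] at hu₂
        have hu₂T : u₂ ≤ T := hu₂.2
        simp only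
        have e : ∀ v₂ : ℝ, 4 * (H * (2 * H - 1)) ^ 2 * (v₁ - u₁) ^ (2 * H - 2) *
              (v₂ - u₂) ^ (2 * H - 2) * (2 * (T - u₂) * (T - v₂) + (T - v₁) * (T - v₂))
            = (4 * (H * (2 * H - 1)) ^ 2 * (v₁ - u₁) ^ (2 * H - 2) * (2 * (T - u₂) + (T - v₁)))
              * ((v₂ - u₂) ^ (2 * H - 2) * (T - v₂) ^ (1:ℝ)) := by
          intro v₂
          rw [Real.rpow_one]
          ring
        simp only [e]
        rw [intervalIntegral.integral_const_mul,
          intA (a := 2 * H - 2) (b := 1) ha (by norm_num) hu₂T]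
        rw [show (2 * H - 2) + 1 + 1 = 2 * H by ring, show (2 * H - 2) + 1 = 2 * H - 1 by ring,
          show (1:ℝ) + 1 = 2 by norm_num, ← hB1def]
        ring
      rw [L3, intervalIntegral.integral_const_mul]
      have contp : ∀ p : ℝ, 0 ≤ p → Continuous (fun u₂ : ℝ => (T - u₂) ^ p) := fun p hp =>
        (continuous_const.sub continuous_id).rpow_const (fun _ => Or.inr hp)
      have hJ : (∫ u₂ in v₁..T, (2 * (T - u₂) + (T - v₁)) * (T - u₂) ^ (2 * H))
          = c₂ * (T - v₁) ^ (2 * H + 2) := by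
        have e2 : Set.EqOn (fun u₂ : ℝ => (2 * (T - u₂) + (T - v₁)) * (T - u₂) ^ (2 * H))
            (fun u₂ : ℝ => 2 * (T - u₂) ^ (2 * H + 1) + (T - v₁) * (T - u₂) ^ (2 * H))
            (Set.uIcc v₁ T) := by
          intro u₂ hu₂
          rw [uIcc_of_le hv₁T] at hu₂
          simp only
          rw [rpow_succ' (by linarith [hu₂.2] : (0:ℝ) ≤ T - u₂)
            (by linarith : (0:ℝ) < 2 * H + 1)]
          ring
        rw [intervalIntegral.integral_congr e2,
          intervalIntegral.integral_add (f := fun u₂ : ℝ => 2 * (T - u₂) ^ (2 * H + 1))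
            (g := fun u₂ : ℝ => (T - v₁) * (T - u₂) ^ (2 * H))
            (((continuous_const.mul (contp (2 * H + 1) (by linarith))).intervalIntegrable _ _))
            (((continuous_const.mul (contp (2 * H) (by linarith))).intervalIntegrable _ _)),
          intervalIntegral.integral_const_mul, intervalIntegral.integral_const_mul,
          intB (by linarith : (-1:ℝ) < 2 * H + 1) v₁ T,
          intB (by linarith : (-1:ℝ) < 2 * H) v₁ T]
        have e3 : (T - v₁) * (T - v₁) ^ (2 * H + 1) = (T - v₁) ^ (2 * H + 1 + 1) := by
          rw [rpow_succ' (by linarith : (0:ℝ) ≤ T - v₁) (by linarith : (0:ℝ) < 2 * H + 1 + 1)]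
          ring
        rw [show (T - v₁) * ((T - v₁) ^ (2 * H + 1) / (2 * H + 1))
            = ((T - v₁) * (T - v₁) ^ (2 * H + 1)) / (2 * H + 1) by ring, e3,
          show (2:ℝ) * H + 1 + 1 = 2 * H + 2 by ring, show (2:ℝ) * H + 1 = 2 * H + 1 by ring,
          hc2def]
        ring
      rw [hJ]
      ring
    rw [L2, intervalIntegral.integral_const_mul,
      intA (a := 2 * H - 2) (b := 2 * H + 2) ha (by linarith) hu₁T]
    rw [show (2 * H - 2) + (2 * H + 2) + 1 = 4 * H + 1 by ring,
      show (2 * H - 2) + 1 = 2 * H - 1 by ring, show (2 * H + 2) + 1 = 2 * H + 3 by ring,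
      ← hB2def]
    ring
  rw [L1, intervalIntegral.integral_const_mul,
    intB (by linarith : (-1:ℝ) < 4 * H + 1) 0 T, sub_zero,
    show (4 * H + 1) + 1 = 4 * H + 2 by ring]
  have hB1 : B1 = 1 / (2 * H - 1) - 1 / (2 * H) := by
    rw [hB1def, betaFn_s2 h2H1, show 2 * H - 1 + 1 = 2 * H by ring]
  have h1 : (2 * H - 1) ≠ 0 := h2H1.ne'
  have h2 : (2 * H : ℝ) ≠ 0 := by positivity
  have h3 : (2 * H + 1 : ℝ) ≠ 0 := by positivity
  have h4 : (2 * H + 2 : ℝ) ≠ 0 := by positivity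
  have h5 : (4 * H + 2 : ℝ) ≠ 0 := by positivity
  have hB2' : B2 = 2 * (2 * H + 2) * (2 * H + 1) * betaFn (2 * H + 1) (2 * H + 2)
      / ((2 * H - 1) * (2 * H)) := by
    rw [eq_div_iff (by positivity : ((2 * H - 1) * (2 * H) : ℝ) ≠ 0)]
    linarith [hB2]
  rw [hB1, hc2def, hB2']
  field_simp
  field_simp [show H * 2 - 1 ≠ 0 by intro h; apply h1; linarith]
  ring
end

section
/- Let 1/2 < H < 1, let 0 ≤ r < T, let J ≥ 1 be an integer, and let ε ∈ (0, 1/4]. Set a := T^{2H} − r^{2H} + (T−r)^{2H} and b := (T−r)^H. Then the sequence a_N := ∑_{i=0}^{N} (2N−i)^{(1/4−ε)(2N−i)} · C(N,i)² · (i!)^{1/2} · (N+J−1)! / ( 2^{N−i} (N!)² ) · a^{N−i} · b^{i} tends to 0 as N → ∞. (Consequently any random variable whose iterated fractional Hida Malliavin derivatives of total order N have L² norm bounded by c·N^{(1/4−ε)N} satisfies the paper's Assumption (𝒜).) -/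
open Finset Nat Filter

lemma myFactAddLe (n m : ℕ) : (n + m)! ≤ n ! * (n + m) ^ m := by
  induction m with
  | zero => simp
  | succ k ih =>
    have h1 : (n + (k+1))! = (n + k + 1) * (n + k)! := by
      rw [← Nat.add_assoc, Nat.factorial_succ]
    rw [h1]
    calc (n+k+1) * (n+k)! ≤ (n+k+1) * (n ! * (n+k)^k) := Nat.mul_le_mul_left _ ih
    _ ≤ (n+k+1) * (n ! * (n+k+1)^k) := by
      have : (n+k)^k ≤ (n+k+1)^k := Nat.pow_le_pow_left (by omega) k
      exact Nat.mul_le_mul_left _ (Nat.mul_le_mul_left _ this)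
    _ = n ! * (n + (k+1))^(k+1) := by ring

lemma myChooseLe (N i : ℕ) (h : i ≤ N) : N.choose i ≤ 2 ^ N :=
  calc N.choose i ≤ ∑ m ∈ Finset.range (N+1), N.choose m :=
        Finset.single_le_sum (fun j _ => Nat.zero_le _) (Finset.mem_range.2 (by omega))
  _ = 2 ^ N := Nat.sum_range_choose N

lemma myPowLeFact (n : ℕ) : (n:ℝ) ^ n ≤ n ! * Real.exp 1 ^ n := by
  have h := Real.sum_le_exp_of_nonneg (x := (n:ℝ)) n.cast_nonneg (n+1)
  have h2 : (n:ℝ)^n / n ! ≤ Real.exp n :=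
    le_trans (Finset.single_le_sum (f := fun i => (n:ℝ)^i / (i ! : ℝ))
      (fun i _ => by positivity) (Finset.self_mem_range_succ n)) h
  rw [div_le_iff₀ (by positivity)] at h2
  calc (n:ℝ)^n ≤ Real.exp n * n ! := h2
  _ = n ! * Real.exp 1 ^ n := by rw [Real.exp_one_pow]; ring

/-- Per-term bound. -/
lemma myTermBound (ε C : ℝ) (hε : 0 < ε) (hε4 : ε ≤ 1/4) (hC : 1 ≤ C)
    (a b : ℝ) (ha : 0 ≤ a) (hb : 0 ≤ b) (haC : a ≤ C) (hbC : b ≤ C)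
    (J N i : ℕ) (hJ : 1 ≤ J) (hN : 1 ≤ N) (hi : i ≤ N) :
    (2 * (N : ℝ) - i) ^ ((1 / 4 - ε) * (2 * (N : ℝ) - i)) *
      (N.choose i : ℝ) ^ 2 * (i.factorial : ℝ) ^ ((1 : ℝ) / 2) *
      ((N + J - 1).factorial : ℝ) / ((2 : ℝ) ^ (N - i) * (N.factorial : ℝ) ^ 2) *
      a ^ (N - i) * b ^ i ≤
    ((N:ℝ) + J) ^ J * ((8 * Real.exp 1 * C) * (N:ℝ) ^ (-(2*ε))) ^ N := by
  set n : ℝ := (N : ℝ) with hn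
  have hn1 : (1:ℝ) ≤ n := by rw [hn]; exact_mod_cast hN
  have hn0 : (0:ℝ) < n := by linarith
  have hiN : (i:ℝ) ≤ n := by rw [hn]; exact_mod_cast hi
  have hi0 : (0:ℝ) ≤ i := Nat.cast_nonneg i
  have hbase : (0:ℝ) ≤ 2 * n - i := by linarith
  have he : (0:ℝ) ≤ 1/4 - ε := by linarith
  have hfpos : (0:ℝ) < (N ! : ℝ) := by exact_mod_cast N.factorial_pos
  -- A1 bound
  have h1 : (2 * n - i) ^ ((1 / 4 - ε) * (2 * n - i)) ≤ (2*n) ^ ((1/2 - 2*ε) * n) := by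
    have e1 : (2 * n - i) ^ ((1 / 4 - ε) * (2 * n - i)) ≤ (2*n) ^ ((1 / 4 - ε) * (2 * n - i)) :=
      Real.rpow_le_rpow hbase (by linarith) (mul_nonneg he hbase)
    have e2 : (2*n) ^ ((1 / 4 - ε) * (2 * n - i)) ≤ (2*n) ^ ((1 / 4 - ε) * (2 * n)) :=
      Real.rpow_le_rpow_of_exponent_le (by linarith) (mul_le_mul_of_nonneg_left (by linarith) he)
    have e3 : (1 / 4 - ε) * (2 * n) = (1/2 - 2*ε) * n := by ring
    rw [e3] at e2; exact e1.trans e2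
  -- choose bound
  have h2 : ((N.choose i : ℝ)) ^ 2 ≤ 4 ^ N := by
    have : (N.choose i : ℝ) ≤ 2 ^ N := by exact_mod_cast myChooseLe N i hi
    calc ((N.choose i : ℝ)) ^ 2 ≤ ((2:ℝ) ^ N) ^ 2 :=
          pow_le_pow_left₀ (Nat.cast_nonneg _) this 2
    _ = 4 ^ N := by rw [← pow_mul, pow_mul']; norm_num
  -- factorial sqrt bound
  have h3 : (i ! : ℝ) ^ ((1:ℝ)/2) ≤ n ^ (n / 2) := by
    have hle : (i ! : ℝ) ≤ n ^ (n : ℝ) := by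
      rw [hn, Real.rpow_natCast]
      exact_mod_cast (Nat.factorial_le hi).trans (Nat.factorial_le_pow N)
    calc (i ! : ℝ) ^ ((1:ℝ)/2) ≤ (n ^ (n:ℝ)) ^ ((1:ℝ)/2) :=
          Real.rpow_le_rpow (Nat.cast_nonneg _) hle (by norm_num)
    _ = n ^ (n / 2) := by rw [← Real.rpow_mul hn0.le]; ring_nf
  -- (N+J-1)! bound
  have h4 : ((N + J - 1)! : ℝ) ≤ (N ! : ℝ) * (n + J) ^ J := by
    have hnat : (N + J - 1)! ≤ N ! * (N + J) ^ J := by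
      have h0 : N + J - 1 = N + (J - 1) := by omega
      calc (N + J - 1)! = (N + (J-1))! := by rw [h0]
      _ ≤ N ! * (N + (J-1)) ^ (J-1) := myFactAddLe N (J-1)
      _ ≤ N ! * (N + J) ^ (J-1) := by
          exact Nat.mul_le_mul_left _ (Nat.pow_le_pow_left (by omega) _)
      _ ≤ N ! * (N + J) ^ J := by
          exact Nat.mul_le_mul_left _ (Nat.pow_le_pow_right (by omega) (by omega))
    calc ((N + J - 1)! : ℝ) ≤ ((N ! * (N + J) ^ J : ℕ) : ℝ) := by exact_mod_cast hnat
    _ = (N ! : ℝ) * (n + J) ^ J := by push_cast; ring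
  -- denominator bound
  have h5 : (1:ℝ) * (N ! : ℝ)^2 ≤ (2:ℝ) ^ (N - i) * (N ! : ℝ) ^ 2 := by
    have : (1:ℝ) ≤ 2 ^ (N - i) := one_le_pow₀ (by norm_num)
    nlinarith [sq_nonneg ((N ! : ℝ))]
  -- a,b bound
  have h6 : a ^ (N - i) * b ^ i ≤ C ^ N := by
    have e1 : a ^ (N-i) * b ^ i ≤ C ^ (N-i) * C ^ i :=
      mul_le_mul (pow_le_pow_left₀ ha haC _) (pow_le_pow_left₀ hb hbC _)
        (pow_nonneg hb _) (pow_nonneg (by linarith) _)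
    have e2 : C ^ (N-i) * C ^ i = C ^ N := by rw [← pow_add, Nat.sub_add_cancel hi]
    rw [e2] at e1; exact e1
  -- main calc
  have hC0 : (0:ℝ) < C := by linarith
  calc (2 * n - i) ^ ((1 / 4 - ε) * (2 * n - i)) * (N.choose i : ℝ) ^ 2 *
        (i ! : ℝ) ^ ((1 : ℝ) / 2) * ((N + J - 1)! : ℝ) /
        ((2 : ℝ) ^ (N - i) * (N ! : ℝ) ^ 2) * a ^ (N - i) * b ^ i
      = (2 * n - i) ^ ((1 / 4 - ε) * (2 * n - i)) * (N.choose i : ℝ) ^ 2 *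
        (i ! : ℝ) ^ ((1 : ℝ) / 2) * ((N + J - 1)! : ℝ) * (a ^ (N - i) * b ^ i) /
        ((2 : ℝ) ^ (N - i) * (N ! : ℝ) ^ 2) := by ring
    _ ≤ (2*n) ^ ((1/2 - 2*ε) * n) * (4:ℝ) ^ N * n ^ (n/2) * ((N ! : ℝ) * (n + J) ^ J) *
        C ^ N / ((1:ℝ) * (N ! : ℝ) ^ 2) := by
        apply div_le_div₀ (by positivity) ?_ (by positivity) h5
        gcongr
    _ = (2:ℝ) ^ ((1/2 - 2*ε) * n) * n ^ ((1/2 - 2*ε) * n) * (4:ℝ) ^ N * (n + J) ^ J *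
        C ^ N * (n ^ (n/2) / (N ! : ℝ)) := by
        rw [Real.mul_rpow (by norm_num) hn0.le]
        field_simp
    _ ≤ (2:ℝ) ^ (N:ℕ) * n ^ ((1/2 - 2*ε) * n) * (4:ℝ) ^ N * (n + J) ^ J *
        C ^ N * (n ^ (n/2) / (N ! : ℝ)) := by
        have : (2:ℝ) ^ ((1/2 - 2*ε) * n) ≤ (2:ℝ) ^ (n : ℝ) :=
          Real.rpow_le_rpow_of_exponent_le one_le_two (by nlinarith)
        rw [hn, Real.rpow_natCast] at this
        gcongr
    _ = (2:ℝ) ^ (N:ℕ) * (4:ℝ) ^ N * (n + J) ^ J * C ^ N *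
        (n ^ ((1/2 - 2*ε) * n) * n ^ (n/2) / (N ! : ℝ)) := by ring
    _ ≤ (2:ℝ) ^ (N:ℕ) * (4:ℝ) ^ N * (n + J) ^ J * C ^ N *
        (Real.exp 1 ^ N * n ^ (-(2*ε) * n)) := by
        have key : n ^ ((1/2 - 2*ε) * n) * n ^ (n/2) / (N ! : ℝ) ≤
            Real.exp 1 ^ N * n ^ (-(2*ε) * n) := by
          have hsum : n ^ ((1/2 - 2*ε) * n) * n ^ (n/2) = n ^ (n:ℝ) * n ^ (-(2*ε) * n) := by
            rw [← Real.rpow_add hn0, ← Real.rpow_add hn0]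
            ring_nf
          rw [hsum, div_le_iff₀ hfpos]
          have hf : n ^ (n:ℝ) ≤ (N ! : ℝ) * Real.exp 1 ^ N := by
            rw [hn, Real.rpow_natCast]; exact myPowLeFact N
          calc n ^ (n:ℝ) * n ^ (-(2*ε) * n) ≤ ((N ! : ℝ) * Real.exp 1 ^ N) * n ^ (-(2*ε) * n) :=
              mul_le_mul_of_nonneg_right hf (Real.rpow_nonneg hn0.le _)
          _ = Real.exp 1 ^ N * n ^ (-(2*ε) * n) * (N ! : ℝ) := by ring
        gcongr
    _ = ((N:ℝ) + J) ^ J * ((8 * Real.exp 1 * C) * (N:ℝ) ^ (-(2*ε))) ^ N := by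
        have h24 : (2:ℝ)^N * 4^N = 8^N := by rw [← mul_pow]; norm_num
        have hnp : (n ^ (-(2*ε)))^N = n ^ (-(2*ε) * n) := by
          rw [← Real.rpow_natCast (n ^ (-(2*ε))) N, ← Real.rpow_mul hn0.le, hn]
        rw [mul_pow, mul_pow, mul_pow, hnp, ← h24, ← hn]
        ring

/-- Let `1/2 < H < 1`, `0 ≤ r < T`, `J ≥ 1`, `ε ∈ (0, 1/4]`.
With `a = T^(2H) - r^(2H) + (T-r)^(2H)` and `b = (T-r)^H`, the sequence
`a_N = ∑_{i=0}^{N} (2N-i)^{(1/4-ε)(2N-i)} C(N,i)² (i!)^{1/2} (N+J-1)! /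
(2^{N-i} (N!)²) · a^{N-i} b^i` tends to `0` as `N → ∞`. -/
theorem tendsto_assumptionA_bound (H r T ε : ℝ) (J : ℕ) (hH : 1 / 2 < H) (hH1 : H < 1)
    (hr : 0 ≤ r) (hrT : r < T) (hJ : 1 ≤ J) (hε : 0 < ε) (hε4 : ε ≤ 1 / 4) :
    Filter.Tendsto
      (fun N : ℕ => ∑ i ∈ Finset.range (N + 1),
        (2 * (N : ℝ) - i) ^ ((1 / 4 - ε) * (2 * (N : ℝ) - i)) *
          (N.choose i : ℝ) ^ 2 * (i.factorial : ℝ) ^ ((1 : ℝ) / 2) *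
          ((N + J - 1).factorial : ℝ) / ((2 : ℝ) ^ (N - i) * (N.factorial : ℝ) ^ 2) *
          (T ^ (2 * H) - r ^ (2 * H) + (T - r) ^ (2 * H)) ^ (N - i) *
          ((T - r) ^ H) ^ i)
      Filter.atTop (nhds 0) := by
  set a : ℝ := T ^ (2 * H) - r ^ (2 * H) + (T - r) ^ (2 * H) with ha_def
  set b : ℝ := (T - r) ^ H with hb_def
  have hT : 0 < T := hr.trans_lt hrT
  have hTr : 0 < T - r := by linarith
  have hrT2 : r ^ (2*H) ≤ T ^ (2*H) :=
    (Real.rpow_le_rpow hr hrT.le (by linarith)).trans_eq rfl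
  have ha : 0 < a := by
    have := Real.rpow_pos_of_pos hTr (2*H)
    have := Real.rpow_pos_of_pos hT (2*H)
    simp only [ha_def]; linarith
  have hb : 0 < b := Real.rpow_pos_of_pos hTr H
  set C : ℝ := max (max a b) 1 with hC_def
  have hC1 : (1:ℝ) ≤ C := le_max_right _ _
  have haC : a ≤ C := le_trans (le_max_left a b) (le_max_left _ _)
  have hbC : b ≤ C := le_trans (le_max_right a b) (le_max_left _ _)
  set K : ℝ := 8 * Real.exp 1 * C with hK_def
  have hK0 : 0 < K := by positivity
  -- nonnegativity of terms
  have hterm_nonneg : ∀ N : ℕ, ∀ i ∈ Finset.range (N+1), (0:ℝ) ≤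
      (2 * (N : ℝ) - i) ^ ((1 / 4 - ε) * (2 * (N : ℝ) - i)) *
        (N.choose i : ℝ) ^ 2 * (i.factorial : ℝ) ^ ((1 : ℝ) / 2) *
        ((N + J - 1).factorial : ℝ) / ((2 : ℝ) ^ (N - i) * (N.factorial : ℝ) ^ 2) *
        a ^ (N - i) * b ^ i := by
    intro N i hi
    have hi' : i ≤ N := Nat.lt_succ_iff.mp (Finset.mem_range.mp hi)
    have hbase : (0:ℝ) ≤ 2 * (N:ℝ) - i := by
      have h1 : (i:ℝ) ≤ (N:ℝ) := by exact_mod_cast hi'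
      have h2 : (0:ℝ) ≤ (N:ℝ) := Nat.cast_nonneg N
      linarith
    have h0 : (0:ℝ) ≤ (2 * (N : ℝ) - i) ^ ((1 / 4 - ε) * (2 * (N : ℝ) - i)) :=
      Real.rpow_nonneg hbase _
    refine mul_nonneg (mul_nonneg (div_nonneg (mul_nonneg (mul_nonneg (mul_nonneg h0
      (sq_nonneg _)) (Real.rpow_nonneg (Nat.cast_nonneg _) _)) (Nat.cast_nonneg _))
      (by positivity)) (pow_nonneg ha.le _)) (pow_nonneg hb.le _)
  -- eventual pointwise bound
  have hhalf : ∀ᶠ N : ℕ in atTop,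
      (∑ i ∈ Finset.range (N + 1),
        (2 * (N : ℝ) - i) ^ ((1 / 4 - ε) * (2 * (N : ℝ) - i)) *
          (N.choose i : ℝ) ^ 2 * (i.factorial : ℝ) ^ ((1 : ℝ) / 2) *
          ((N + J - 1).factorial : ℝ) / ((2 : ℝ) ^ (N - i) * (N.factorial : ℝ) ^ 2) *
          a ^ (N - i) * b ^ i) ≤ ((N:ℝ) + J) ^ (J+1) * (1/2:ℝ) ^ N := by
    have htend : Tendsto (fun N : ℕ => (N:ℝ) ^ (2*ε)) atTop atTop :=
      (tendsto_rpow_atTop (by linarith)).comp tendsto_natCast_atTop_atTop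
    filter_upwards [eventually_ge_atTop 1, htend.eventually_ge_atTop (2*K)] with N hN hKN
    have hn0 : (0:ℝ) < (N:ℝ) := by exact_mod_cast hN
    have hx0 : (0:ℝ) < (N:ℝ) ^ (2*ε) := Real.rpow_pos_of_pos hn0 _
    have hsmall : K * (N:ℝ) ^ (-(2*ε)) ≤ 1/2 := by
      rw [Real.rpow_neg hn0.le]
      rw [mul_inv_le_iff₀ hx0]
      linarith
    have hJN : ((N:ℝ) + 1) ≤ (N:ℝ) + J := by
      have : (1:ℝ) ≤ (J:ℝ) := by exact_mod_cast hJ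
      linarith
    calc (∑ i ∈ Finset.range (N + 1),
        (2 * (N : ℝ) - i) ^ ((1 / 4 - ε) * (2 * (N : ℝ) - i)) *
          (N.choose i : ℝ) ^ 2 * (i.factorial : ℝ) ^ ((1 : ℝ) / 2) *
          ((N + J - 1).factorial : ℝ) / ((2 : ℝ) ^ (N - i) * (N.factorial : ℝ) ^ 2) *
          a ^ (N - i) * b ^ i)
        ≤ ∑ i ∈ Finset.range (N + 1), ((N:ℝ) + J) ^ J * (K * (N:ℝ) ^ (-(2*ε))) ^ N :=
          Finset.sum_le_sum (fun i hi =>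
            myTermBound ε C hε hε4 hC1 a b ha.le hb.le haC hbC J N i hJ hN
              (Nat.lt_succ_iff.mp (Finset.mem_range.mp hi)))
      _ = ((N:ℝ) + 1) * (((N:ℝ) + J) ^ J * (K * (N:ℝ) ^ (-(2*ε))) ^ N) := by
          rw [Finset.sum_const, Finset.card_range, nsmul_eq_mul]
          push_cast
          ring
      _ ≤ ((N:ℝ) + J) * (((N:ℝ) + J) ^ J * (1/2:ℝ) ^ N) := by
          have hKn : (0:ℝ) ≤ K * (N:ℝ) ^ (-(2*ε)) :=
            mul_nonneg hK0.le (Real.rpow_nonneg hn0.le _)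
          have hp : (K * (N:ℝ) ^ (-(2*ε))) ^ N ≤ (1/2:ℝ) ^ N :=
            pow_le_pow_left₀ hKn hsmall N
          have h1 : (0:ℝ) ≤ ((N:ℝ) + J) ^ J := by positivity
          have h2 : (0:ℝ) ≤ (N:ℝ) + 1 := by positivity
          exact mul_le_mul hJN (mul_le_mul_of_nonneg_left hp h1) (by positivity) (by positivity)
      _ = ((N:ℝ) + J) ^ (J+1) * (1/2:ℝ) ^ N := by ring
  -- the dominating sequence tends to 0
  have hg : Tendsto (fun N : ℕ => ((N:ℝ) + J) ^ (J+1) * (1/2:ℝ) ^ N) atTop (nhds 0) := by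
    have h1 : Tendsto (fun n : ℕ => (n:ℝ) ^ (J+1) * (1/2:ℝ) ^ n) atTop (nhds 0) :=
      (summable_pow_mul_geometric_of_norm_lt_one (J+1)
        (r := (1/2:ℝ)) (by rw [Real.norm_eq_abs, abs_lt]; constructor <;> norm_num)).tendsto_atTop_zero
    have h2 := (h1.comp (tendsto_add_atTop_nat J)).const_mul ((2:ℝ)^J)
    simp only [Function.comp] at h2
    rw [mul_zero] at h2
    refine h2.congr (fun N => ?_)
    push_cast
    rw [pow_add]
    have hc : (1/2:ℝ)^J * 2^J = 1 := by rw [← mul_pow]; norm_num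
    linear_combination (((N:ℝ)+J)^(J+1) * (1/2:ℝ)^N) * hc
  exact squeeze_zero'
    (Filter.Eventually.of_forall (fun N => Finset.sum_nonneg (hterm_nonneg N))) hhalf hg
end
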